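/- arXiv:1803.03912 — 2 statements merged into one kernel-verified Lean document; each statement's English description precedes it below -/
import Mathlib

section
/- Let n ≥ 2 and let q be a prime power. There exists a constant c, depending only on n and q, such that for all positive integers T_1,...,T_n and every integer K ≥ 0, the number of sequences s : ℕⁿ → F_q that are periodic with period (T_1,...,T_n) and have linear complexity L(s) = K is at most c · q^{(n−1)K² + K^{3/2} + 2K}. -/
open MvPolynomial

/-- The value at `m` of the sequence `P·s`, i.e. `∑_j a_j s(m+j)` where `P = ∑_j a_j X^j`. -/
def recSum {n : ℕ} {F : Type} [Field F] (s : (Fin n → ℕ) → F)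
    (P : MvPolynomial (Fin n) F) (m : Fin n → ℕ) : F :=
  ∑ j ∈ P.support, P.coeff j * s (fun i => m i + j i)

lemma recSum_superset {n : ℕ} {F : Type} [Field F] (s : (Fin n → ℕ) → F)
    (P : MvPolynomial (Fin n) F) (m : Fin n → ℕ) {T : Finset (Fin n →₀ ℕ)}
    (hT : P.support ⊆ T) :
    ∑ j ∈ T, P.coeff j * s (fun i => m i + j i) = recSum s P m := by
  refine (Finset.sum_subset hT ?_).symm
  intro j _ hj
  rw [MvPolynomial.notMem_support_iff.mp hj, zero_mul]

/-- `I(s)`: the ideal of all polynomials `P = ∑_j a_j X^j` such that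
`∑_j a_j s(m + j) = 0` for all `m`, i.e. of all linear recurrences satisfied by `s`. -/
def seqIdeal {n : ℕ} {F : Type} [Field F] (s : (Fin n → ℕ) → F) :
    Ideal (MvPolynomial (Fin n) F) where
  carrier := {P | ∀ m, recSum s P m = 0}
  zero_mem' := by intro m; simp [recSum]
  add_mem' := by
    intro P Q hP hQ m
    have h : recSum s (P + Q) m
        = ∑ j ∈ P.support ∪ Q.support, (P + Q).coeff j * s (fun i => m i + j i) :=
      (recSum_superset s (P + Q) m (MvPolynomial.support_add)).symm
    rw [h]
    simp only [MvPolynomial.coeff_add, add_mul]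
    rw [Finset.sum_add_distrib,
      recSum_superset s P m Finset.subset_union_left,
      recSum_superset s Q m Finset.subset_union_right, hP m, hQ m, add_zero]
  smul_mem' := by
    intro c P hP
    simp only [smul_eq_mul, Set.mem_setOf_eq] at *
    induction c using MvPolynomial.induction_on generalizing P with
    | C a =>
      intro m
      have hsupp : (C a * P).support ⊆ P.support := by
        rw [← MvPolynomial.smul_eq_C_mul]
        exact Finsupp.support_smul
      rw [← recSum_superset s (C a * P) m hsupp]
      have : ∀ j ∈ P.support, (C a * P).coeff j * s (fun i => m i + j i)
          = a * (P.coeff j * s (fun i => m i + j i)) := by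
        intro j _
        rw [MvPolynomial.coeff_C_mul, mul_assoc]
      rw [Finset.sum_congr rfl this, ← Finset.mul_sum]
      rw [recSum_superset s P m (le_refl _)]
      rw [hP m, mul_zero]
    | add p q hp hq =>
      intro m
      rw [add_mul]
      have h1 := hp hP
      have h2 := hq hP
      have h : recSum s (p * P + q * P) m
          = ∑ j ∈ (p * P).support ∪ (q * P).support,
            (p * P + q * P).coeff j * s (fun i => m i + j i) :=
        (recSum_superset s _ m (MvPolynomial.support_add)).symm
      rw [h]
      simp only [MvPolynomial.coeff_add, add_mul]
      rw [Finset.sum_add_distrib,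
        recSum_superset s _ m Finset.subset_union_left,
        recSum_superset s _ m Finset.subset_union_right, h1 m, h2 m, add_zero]
    | mul_X p i hp =>
      intro m
      rw [mul_assoc]
      have hX : ∀ m', recSum s (X i * P) m' = 0 := by
        intro m'
        unfold recSum
        rw [MvPolynomial.support_X_mul, Finset.sum_map]
        have : ∀ j ∈ P.support,
            (X i * P).coeff (addLeftEmbedding (Finsupp.single i 1) j)
              * s (fun t => m' t + (addLeftEmbedding (Finsupp.single i 1) j) t)
            = P.coeff j * s (fun t => (m' t + Finsupp.single i 1 t) + j t) := by
          intro j _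
          rw [addLeftEmbedding_apply, MvPolynomial.coeff_X_mul]
          have harg : (fun t => m' t + ((Finsupp.single i 1 + j : Fin n →₀ ℕ)) t)
              = fun t => (m' t + Finsupp.single i 1 t) + j t := by
            funext t; rw [Finsupp.add_apply]; ring
          rw [harg]
        rw [Finset.sum_congr rfl this]
        have := hP (fun t => m' t + Finsupp.single i 1 t)
        unfold recSum at this
        exact this
      exact hp hX m

/-- The linear complexity `L(s)`: the dimension of `F[X_1,…,X_n]/I(s)` over `F`. -/
noncomputable def linComp {n : ℕ} {F : Type} [Field F] (s : (Fin n → ℕ) → F) : ℕ :=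
  Module.finrank F (MvPolynomial (Fin n) F ⧸ seqIdeal s)

/-- `s` is periodic with period `(T_1,…,T_n)` if `X_i^{T_i} - 1 ∈ I(s)` for all `i`. -/
def IsPeriodic {n : ℕ} {F : Type} [Field F] (T : Fin n → ℕ) (s : (Fin n → ℕ) → F) : Prop :=
  ∀ i, (X i : MvPolynomial (Fin n) F) ^ T i - 1 ∈ seqIdeal s

/-- The `k`-error linear complexity `L_k(s)` of a `(T_1,…,T_n)`-periodic sequence `s`:
the minimum of `L(σ)` over all `(T_1,…,T_n)`-periodic sequences `σ` differing from `s`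
in at most `k` positions of the box `{m : 0 ≤ m_i ≤ T_i - 1}`. -/
noncomputable def errComp {n : ℕ} {F : Type} [Field F] (T : Fin n → ℕ) (k : ℕ)
    (s : (Fin n → ℕ) → F) : ℕ :=
  sInf {K | ∃ σ : (Fin n → ℕ) → F, IsPeriodic T σ ∧
    ({m : Fin n → ℕ | (∀ i, m i < T i) ∧ σ m ≠ s m}).ncard ≤ k ∧ linComp σ = K}

namespace LC

set_option maxHeartbeats 1000000
set_option synthInstance.maxHeartbeats 400000

open MvPolynomial Finset

variable {n : ℕ} {F : Type} [Field F]

lemma mem_seqIdeal_iff {s : (Fin n → ℕ) → F} {P : MvPolynomial (Fin n) F} :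
    P ∈ seqIdeal s ↔ ∀ m, recSum s P m = 0 := Iff.rfl

lemma recSum_add (s : (Fin n → ℕ) → F) (P Q : MvPolynomial (Fin n) F) (m : Fin n → ℕ) :
    recSum s (P + Q) m = recSum s P m + recSum s Q m := by
  have h : recSum s (P + Q) m
      = ∑ j ∈ P.support ∪ Q.support, (P + Q).coeff j * s (fun i => m i + j i) :=
    (recSum_superset s (P + Q) m (MvPolynomial.support_add)).symm
  rw [h]
  simp only [MvPolynomial.coeff_add, add_mul]
  rw [Finset.sum_add_distrib,
    recSum_superset s P m Finset.subset_union_left,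
    recSum_superset s Q m Finset.subset_union_right]

lemma recSum_monomial (s : (Fin n → ℕ) → F) (a : Fin n →₀ ℕ) (c : F) (m : Fin n → ℕ) :
    recSum s (monomial a c) m = c * s (fun i => m i + a i) := by
  have hsupp : (monomial a c : MvPolynomial (Fin n) F).support ⊆ {a} :=
    MvPolynomial.support_monomial_subset
  rw [← recSum_superset s _ m hsupp]
  simp [MvPolynomial.coeff_monomial]

/-- `P ↦ recSum s P 0` as an additive monoid hom. -/
def recSum0 (s : (Fin n → ℕ) → F) : MvPolynomial (Fin n) F →+ F where
  toFun P := recSum s P 0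
  map_zero' := by simp [recSum]
  map_add' P Q := recSum_add s P Q 0

lemma recSum0_monomial (s : (Fin n → ℕ) → F) (a : Fin n →₀ ℕ) (c : F) :
    recSum0 s (monomial a c) = c * s ⇑a := by
  show recSum s (monomial a c) 0 = c * s ⇑a
  rw [recSum_monomial]
  have : (fun i => (0 : Fin n → ℕ) i + a i) = ⇑a := by funext i; simp
  rw [this]

lemma recSum0_of_mem {s : (Fin n → ℕ) → F} {P : MvPolynomial (Fin n) F}
    (h : P ∈ seqIdeal s) : recSum0 s P = 0 := h 0

/-- The quotient module `F[X]/I(s)`. -/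
abbrev QS (s : (Fin n → ℕ) → F) := MvPolynomial (Fin n) F ⧸ seqIdeal s

/-- The class of the monomial `X^m` in `F[X]/I(s)`. -/
noncomputable def clq (s : (Fin n → ℕ) → F) (m : Fin n →₀ ℕ) : QS s :=
  Ideal.Quotient.mk (seqIdeal s) (monomial m 1)

lemma span_range_clq (s : (Fin n → ℕ) → F) :
    Submodule.span F (Set.range (clq s)) = ⊤ := by
  have h1 : Submodule.span F (Set.range fun m : Fin n →₀ ℕ => (monomial m (1 : F) :
      MvPolynomial (Fin n) F)) = ⊤ := by
    have := (MvPolynomial.basisMonomials (Fin n) F).span_eq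
    rwa [MvPolynomial.coe_basisMonomials] at this
  have h2 : Set.range (clq s)
      = (Ideal.Quotient.mkₐ F (seqIdeal s)).toLinearMap ''
        (Set.range fun m : Fin n →₀ ℕ => (monomial m (1 : F) : MvPolynomial (Fin n) F)) := by
    rw [← Set.range_comp]; rfl
  rw [h2, ← Submodule.map_span, h1, Submodule.map_top, LinearMap.range_eq_top]
  exact Ideal.Quotient.mkₐ_surjective F _

/-- Multiplication by `X^c` on the quotient, as a linear map. -/
noncomputable def mulM (s : (Fin n → ℕ) → F) (c : Fin n →₀ ℕ) : QS s →ₗ[F] QS s :=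
  LinearMap.mulLeft F (clq s c)

lemma mulM_clq (s : (Fin n → ℕ) → F) (c m : Fin n →₀ ℕ) :
    mulM s c (clq s m) = clq s (c + m) := by
  show clq s c * clq s m = clq s (c + m)
  unfold clq
  rw [← map_mul, MvPolynomial.monomial_mul, one_mul]

end LC
namespace LC

set_option maxHeartbeats 1000000
set_option synthInstance.maxHeartbeats 400000

open MvPolynomial Finset

variable {n : ℕ} {F : Type} [Field F]

/-- The lexicographic monomial order on `Fin n →₀ ℕ`. -/
noncomputable def mo (n : ℕ) : MonomialOrder (Fin n) := MonomialOrder.lex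

/-- The set of standard monomials of `I(s)`: those whose class is not in the span of the
classes of smaller monomials. -/
def ΔSet (s : (Fin n → ℕ) → F) : Set (Fin n →₀ ℕ) :=
  {m | clq s m ∉ Submodule.span F (clq s '' {k | (mo n).toSyn k < (mo n).toSyn m})}

lemma clq_mem_span_ΔSet (s : (Fin n → ℕ) → F) (m : Fin n →₀ ℕ) :
    clq s m ∈ Submodule.span F (clq s '' ΔSet s) := by
  have main : ∀ b : (mo n).syn, ∀ m : Fin n →₀ ℕ, (mo n).toSyn m = b →
      clq s m ∈ Submodule.span F (clq s '' ΔSet s) := by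
    intro b
    induction b using WellFoundedLT.induction with
    | ind b IH =>
      intro m hm
      by_cases hΔ : m ∈ ΔSet s
      · exact Submodule.subset_span ⟨m, hΔ, rfl⟩
      · have h1 : clq s m ∈ Submodule.span F (clq s '' {k | (mo n).toSyn k < (mo n).toSyn m}) := by
          simpa [ΔSet] using hΔ
        have h2 : Submodule.span F (clq s '' {k | (mo n).toSyn k < (mo n).toSyn m})
            ≤ Submodule.span F (clq s '' ΔSet s) := by
          rw [Submodule.span_le]
          rintro x ⟨k, hk, rfl⟩
          exact IH ((mo n).toSyn k) (hm ▸ hk) k rfl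
        exact h2 h1
  exact main _ m rfl

lemma ΔSet_downclosed (s : (Fin n → ℕ) → F) {a b : Fin n →₀ ℕ}
    (ha : a ∈ ΔSet s) (hba : b ≤ a) : b ∈ ΔSet s := by
  by_contra hb
  apply ha
  have h1 : clq s b ∈ Submodule.span F (clq s '' {k | (mo n).toSyn k < (mo n).toSyn b}) := by
    simpa [ΔSet] using hb
  have hab : (a - b) + b = a := tsub_add_cancel_of_le hba
  have h2 : clq s a = mulM s (a - b) (clq s b) := by rw [mulM_clq, hab]
  rw [h2]
  have h3 : mulM s (a - b) (clq s b) ∈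
      Submodule.map (mulM s (a - b)) (Submodule.span F
        (clq s '' {k | (mo n).toSyn k < (mo n).toSyn b})) :=
    Submodule.mem_map_of_mem h1
  rw [Submodule.map_span] at h3
  refine Submodule.span_le.mpr ?_ h3
  rintro x ⟨y, ⟨k, hk, rfl⟩, rfl⟩
  rw [mulM_clq]
  apply Submodule.subset_span
  refine ⟨(a - b) + k, ?_, rfl⟩
  show (mo n).toSyn ((a-b) + k) < (mo n).toSyn a
  calc (mo n).toSyn ((a-b) + k) = (mo n).toSyn (a-b) + (mo n).toSyn k := map_add _ _ _
    _ < (mo n).toSyn (a-b) + (mo n).toSyn b := by exact (add_lt_add_iff_left _).mpr hk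
    _ = (mo n).toSyn ((a-b) + b) := (map_add _ _ _).symm
    _ = (mo n).toSyn a := by rw [hab]

lemma linearIndependent_clq_ΔSet (s : (Fin n → ℕ) → F) :
    LinearIndependent F (fun a : ΔSet s => clq s a.val) := by
  rw [linearIndependent_iff']
  intro S g hsum
  induction S using Finset.strongInduction with
  | _ S IH =>
    rcases S.eq_empty_or_nonempty with rfl | hne
    · intro i hi; simp at hi
    · obtain ⟨a, haS, hamax⟩ := Finset.exists_max_image S
        (fun b => (mo n).toSyn b.val) hne
      have hga : g a = 0 := by
        by_contra hga
        apply a.prop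
        have hsum' : (g a) • clq s a.val = - ∑ b ∈ S.erase a, g b • clq s b.val := by
          rw [eq_neg_iff_add_eq_zero]
          rw [← Finset.add_sum_erase S _ haS] at hsum
          exact hsum
        have ha' : clq s a.val = (g a)⁻¹ • ((g a) • clq s a.val) := by
          rw [smul_smul, inv_mul_cancel₀ hga, one_smul]
        rw [ha', hsum']
        apply Submodule.smul_mem
        apply Submodule.neg_mem
        apply Submodule.sum_mem
        intro b hb
        apply Submodule.smul_mem
        apply Submodule.subset_span
        refine ⟨b.val, ?_, rfl⟩
        have hb1 : (mo n).toSyn b.val ≤ (mo n).toSyn a.val :=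
          hamax b (Finset.mem_of_mem_erase hb)
        have hb2 : b.val ≠ a.val := fun h => (Finset.ne_of_mem_erase hb) (Subtype.ext h)
        exact lt_of_le_of_ne hb1 (fun h => hb2 ((mo n).toSyn.injective h))
      have hrest : ∑ b ∈ S.erase a, g b • clq s b.val = 0 := by
        rw [← Finset.add_sum_erase S _ haS, hga, zero_smul, zero_add] at hsum
        exact hsum
      intro i hiS
      rcases eq_or_ne i a with rfl | hia
      · exact hga
      · exact IH (S.erase a) (Finset.erase_ssubset haS) hrest i
          (Finset.mem_erase.mpr ⟨hia, hiS⟩)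

/-- The standard monomial basis of `F[X]/I(s)`. -/
noncomputable def Bs (s : (Fin n → ℕ) → F) : Module.Basis (ΔSet s) F (QS s) :=
  Module.Basis.mk (linearIndependent_clq_ΔSet s) (by
    rw [← Set.image_eq_range]
    intro x _
    have hx : x ∈ Submodule.span F (Set.range (clq s)) := by
      rw [span_range_clq]; trivial
    refine Submodule.span_le.mpr ?_ hx
    rintro y ⟨m, rfl⟩
    exact clq_mem_span_ΔSet s m)

lemma Bs_apply (s : (Fin n → ℕ) → F) (a : ΔSet s) : Bs s a = clq s a.val := by
  rw [Bs, Module.Basis.mk_apply]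

open Classical in
/-- Coordinates of the class of `X^m` w.r.t. the standard monomial basis. -/
noncomputable def NN (s : (Fin n → ℕ) → F) (m : Fin n →₀ ℕ) (a : Fin n →₀ ℕ) : F :=
  if h : a ∈ ΔSet s then (Bs s).repr (clq s m) ⟨a, h⟩ else 0

lemma NN_of_not_mem {s : (Fin n → ℕ) → F} {a : Fin n →₀ ℕ} (h : a ∉ ΔSet s)
    (m : Fin n →₀ ℕ) : NN s m a = 0 := by
  rw [NN, dif_neg h]

lemma NN_self {s : (Fin n → ℕ) → F} {a : Fin n →₀ ℕ} (ha : a ∈ ΔSet s)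
    (b : Fin n →₀ ℕ) : NN s a b = if b = a then 1 else 0 := by
  by_cases hb : b ∈ ΔSet s
  · rw [NN, dif_pos hb]
    have : clq s a = Bs s ⟨a, ha⟩ := (Bs_apply s ⟨a, ha⟩).symm
    rw [this, Module.Basis.repr_self]
    rw [Finsupp.single_apply]
    by_cases hba : b = a
    · simp [hba]
    · rw [if_neg (by simp only [Subtype.mk_eq_mk]; exact fun h => hba h.symm),
        if_neg hba]
  · rw [NN_of_not_mem hb, if_neg (by rintro rfl; exact hb ha)]

end LC
namespace LC

set_option maxHeartbeats 1000000
set_option synthInstance.maxHeartbeats 400000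

open MvPolynomial Finset

variable {n : ℕ} {F : Type} [Field F]

open Classical in
/-- The standard monomials as a `Finset` (junk if infinite). -/
noncomputable def Δfin (s : (Fin n → ℕ) → F) : Finset (Fin n →₀ ℕ) :=
  if h : (ΔSet s).Finite then h.toFinset else ∅

lemma Δfin_eq {s : (Fin n → ℕ) → F} (h : (ΔSet s).Finite) :
    Δfin s = h.toFinset := by rw [Δfin, dif_pos h]

lemma mem_Δfin_iff {s : (Fin n → ℕ) → F} (h : (ΔSet s).Finite) {a : Fin n →₀ ℕ} :
    a ∈ Δfin s ↔ a ∈ ΔSet s := by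
  rw [Δfin_eq h, Set.Finite.mem_toFinset]

/-- Expansion of the class of a monomial in the standard monomial basis. -/
lemma clq_eq_sum_NN {s : (Fin n → ℕ) → F} (h : (ΔSet s).Finite) (m : Fin n →₀ ℕ) :
    clq s m = ∑ a ∈ Δfin s, NN s m a • clq s a := by
  classical
  letI : Fintype (ΔSet s) := h.fintype
  have hmem : ∀ x, x ∈ Δfin s ↔ x ∈ ΔSet s := fun x => mem_Δfin_iff h
  rw [Finset.sum_subtype (Δfin s) hmem (fun a => NN s m a • clq s a)]
  have heq : ∀ a : ΔSet s, NN s m a.val • clq s a.val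
      = ((Bs s).repr (clq s m)) a • Bs s a := by
    intro a
    rw [NN, dif_pos a.prop, Subtype.coe_eta, Bs_apply]
  rw [Finset.sum_congr rfl (fun a _ => heq a)]
  exact ((Bs s).sum_repr (clq s m)).symm

lemma NN_of_mem {s : (Fin n → ℕ) → F} {b : Fin n →₀ ℕ} (hb : b ∈ ΔSet s)
    (m : Fin n →₀ ℕ) : NN s m b = (Bs s).repr (clq s m) ⟨b, hb⟩ := by
  rw [NN, dif_pos hb]

lemma mk_smul (s : (Fin n → ℕ) → F) (c : F) (P : MvPolynomial (Fin n) F) :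
    Ideal.Quotient.mk (seqIdeal s) (c • P) = c • Ideal.Quotient.mk (seqIdeal s) P := by
  have h := (Ideal.Quotient.mkₐ F (seqIdeal s)).toLinearMap.map_smul c P
  exact h

lemma mk_monomial (s : (Fin n → ℕ) → F) (a : Fin n →₀ ℕ) (c : F) :
    Ideal.Quotient.mk (seqIdeal s) (monomial a c) = c • clq s a := by
  have h1 : (monomial a c : MvPolynomial (Fin n) F) = c • monomial a (1 : F) := by
    rw [MvPolynomial.smul_monomial, smul_eq_mul, mul_one]
  rw [h1, mk_smul]
  rfl

/-- The multiplicative recursion for the coordinates `NN`. -/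
lemma NN_rec {s : (Fin n → ℕ) → F} (h : (ΔSet s).Finite) (m : Fin n →₀ ℕ) (i : Fin n)
    (b : Fin n →₀ ℕ) :
    NN s (m + Finsupp.single i 1) b
      = ∑ a ∈ Δfin s, NN s m a * NN s (a + Finsupp.single i 1) b := by
  classical
  by_cases hb : b ∈ ΔSet s
  · have key : clq s (m + Finsupp.single i 1)
        = ∑ a ∈ Δfin s, NN s m a • clq s (a + Finsupp.single i 1) := by
      have h1 : clq s (m + Finsupp.single i 1) = mulM s (Finsupp.single i 1) (clq s m) := by
        rw [mulM_clq, add_comm]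
      rw [h1, clq_eq_sum_NN h m, map_sum]
      refine Finset.sum_congr rfl (fun a _ => ?_)
      rw [LinearMap.map_smul, mulM_clq, add_comm]
    have h2 : ((Bs s).repr (clq s (m + Finsupp.single i 1))) ⟨b, hb⟩
        = ∑ a ∈ Δfin s, NN s m a * ((Bs s).repr (clq s (a + Finsupp.single i 1))) ⟨b, hb⟩ := by
      rw [key, map_sum, Finsupp.finset_sum_apply]
      refine Finset.sum_congr rfl (fun a _ => ?_)
      rw [LinearEquiv.map_smul, Finsupp.smul_apply, smul_eq_mul]
    rw [NN_of_mem hb, h2]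
    refine Finset.sum_congr rfl (fun a _ => ?_)
    rw [NN_of_mem hb]
  · rw [NN_of_not_mem hb]
    rw [Finset.sum_congr rfl (fun a _ => by rw [NN_of_not_mem hb (a + Finsupp.single i 1),
      mul_zero])]
    rw [Finset.sum_const_zero]

/-- The fundamental evaluation identity: `s(m) = ∑_{a ∈ Δ} N(m)_a s(a)`. -/
lemma s_eq_sum_NN {s : (Fin n → ℕ) → F} (h : (ΔSet s).Finite) (m : Fin n →₀ ℕ) :
    s ⇑m = ∑ a ∈ Δfin s, NN s m a * s ⇑a := by
  classical
  set P : MvPolynomial (Fin n) F :=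
    monomial m 1 - ∑ a ∈ Δfin s, monomial a (NN s m a) with hP
  have hPmem : P ∈ seqIdeal s := by
    rw [← Ideal.Quotient.eq_zero_iff_mem]
    have : Ideal.Quotient.mk (seqIdeal s) P
        = clq s m - ∑ a ∈ Δfin s, NN s m a • clq s a := by
      rw [hP, map_sub, map_sum]
      congr 1
      exact Finset.sum_congr rfl (fun a _ => mk_monomial s a _)
    rw [this, clq_eq_sum_NN h m, sub_self]
  have h0 := recSum0_of_mem hPmem
  rw [hP, map_sub, map_sum] at h0
  rw [recSum0_monomial] at h0
  have h1 : ∀ a ∈ Δfin s, recSum0 s (monomial a (NN s m a)) = NN s m a * s ⇑a :=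
    fun a _ => recSum0_monomial s a _
  rw [Finset.sum_congr rfl h1, one_mul, sub_eq_zero] at h0
  exact h0

/-- Periodicity implies the quotient is finite dimensional. -/
lemma finite_of_periodic {s : (Fin n → ℕ) → F} {T : Fin n → ℕ} (hT : ∀ i, 0 < T i)
    (hs : IsPeriodic T s) : Module.Finite F (QS s) := by
  classical
  set B : Finset (Fin n →₀ ℕ) :=
    (Fintype.piFinset (fun i : Fin n => Finset.range (T i))).image
      (Finsupp.equivFunOnFinite.symm) with hB
  have hmB : ∀ m : Fin n →₀ ℕ, (∀ i, m i < T i) → m ∈ B := by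
    intro m hm
    rw [hB, Finset.mem_image]
    exact ⟨⇑m, by rw [Fintype.mem_piFinset]; exact fun i => Finset.mem_range.mpr (hm i),
      Finsupp.equivFunOnFinite_symm_coe m⟩
  have key : ∀ d : ℕ, ∀ m : Fin n →₀ ℕ, (∑ i, m i) = d →
      clq s m ∈ Submodule.span F (clq s '' ↑B) := by
    intro d
    induction d using Nat.strong_induction_on with
    | _ d IH =>
      intro m hm
      by_cases hbox : ∀ i, m i < T i
      · exact Submodule.subset_span ⟨m, Finset.mem_coe.mpr (hmB m hbox), rfl⟩
      · push_neg at hbox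
        obtain ⟨i, hi⟩ := hbox
        set m' := m - Finsupp.single i (T i) with hm'
        have hmm : m' + Finsupp.single i (T i) = m :=
          tsub_add_cancel_of_le (Finsupp.single_le_iff.mpr hi)
        have hpow : (X i : MvPolynomial (Fin n) F) ^ (T i)
            = monomial (Finsupp.single i (T i)) 1 := MvPolynomial.X_pow_eq_monomial
        have hdiff : (monomial m 1 : MvPolynomial (Fin n) F) - monomial m' 1
            = monomial m' 1 * ((X i : MvPolynomial (Fin n) F) ^ (T i) - 1) := by
          rw [mul_sub, mul_one, hpow, MvPolynomial.monomial_mul, one_mul, hmm]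
        have hmem : (monomial m 1 : MvPolynomial (Fin n) F) - monomial m' 1 ∈ seqIdeal s := by
          rw [hdiff]; exact Ideal.mul_mem_left _ _ (hs i)
        have hclq : clq s m = clq s m' :=
          (Ideal.Quotient.mk_eq_mk_iff_sub_mem _ _).mpr hmem
        rw [hclq]
        refine IH (∑ j, m' j) ?_ m' rfl
        have hle : ∀ j, m' j ≤ m j := by
          intro j
          rw [hm', Finsupp.tsub_apply]
          exact Nat.sub_le _ _
        have hlt : m' i < m i := by
          rw [hm', Finsupp.tsub_apply, Finsupp.single_eq_same]
          have := hT i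
          omega
        calc ∑ j, m' j < ∑ j, m j :=
              Finset.sum_lt_sum (fun j _ => hle j) ⟨i, Finset.mem_univ i, hlt⟩
          _ = d := hm
  have htop : Submodule.span F (clq s '' ↑B) = ⊤ := by
    rw [eq_top_iff, ← span_range_clq s, Submodule.span_le]
    rintro x ⟨m, rfl⟩
    exact key _ m rfl
  rw [Module.finite_def]
  exact ⟨B.image (clq s), by rw [Finset.coe_image, htop]⟩

end LC
namespace LC

open MvPolynomial Finset

variable {n : ℕ} {F : Type} [Field F]

lemma ΔSet_finite (s : (Fin n → ℕ) → F) [Module.Finite F (QS s)] : (ΔSet s).Finite := by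
  have h := (linearIndependent_clq_ΔSet s).finite
  exact Set.toFinite (ΔSet s)

lemma card_Δfin (s : (Fin n → ℕ) → F) [Module.Finite F (QS s)] :
    (Δfin s).card = linComp s := by
  have h := ΔSet_finite s
  letI : Fintype (ΔSet s) := h.fintype
  have h1 : linComp s = Fintype.card (ΔSet s) := Module.finrank_eq_card_basis (Bs s)
  rw [h1, Δfin_eq h, Set.Finite.card_toFinset]

lemma zero_mem_ΔSet {s : (Fin n → ℕ) → F} (hne : (ΔSet s).Nonempty) : 0 ∈ ΔSet s := by
  obtain ⟨a, ha⟩ := hne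
  exact ΔSet_downclosed s ha (show (0 : Fin n →₀ ℕ) ≤ a from zero_le)

lemma coord_lt_card {s : (Fin n → ℕ) → F} (h : (ΔSet s).Finite) {a : Fin n →₀ ℕ}
    (ha : a ∈ ΔSet s) (i : Fin n) : a i < (Δfin s).card := by
  have hsub : (Finset.range (a i + 1)).image (fun k => Finsupp.single i k) ⊆ Δfin s := by
    intro x hx
    rw [Finset.mem_image] at hx
    obtain ⟨k, hk, rfl⟩ := hx
    rw [mem_Δfin_iff h]
    refine ΔSet_downclosed s ha (Finsupp.single_le_iff.mpr ?_)
    rw [Finset.mem_range] at hk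
    omega
  have hcard := Finset.card_le_card hsub
  rw [Finset.card_image_of_injective _ (Finsupp.single_injective i), Finset.card_range] at hcard
  omega

/-- The key combinatorial bound: for a nonempty downward-closed finite set `S ⊆ ℕⁿ`,
the total number of `i`-maximal elements over all directions `i` is at most `(n-1)|S| + 1`. -/
lemma downset_bound (hn : 1 ≤ n) :
    ∀ S : Finset (Fin n →₀ ℕ), S.Nonempty →
      (∀ a ∈ S, ∀ b : Fin n →₀ ℕ, b ≤ a → b ∈ S) →
      ∑ i : Fin n, (S.filter (fun a => a + Finsupp.single i 1 ∉ S)).card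
        ≤ (n - 1) * S.card + 1 := by
  classical
  intro S
  induction S using Finset.strongInduction with
  | _ S IH =>
    intro hne hdc
    obtain ⟨a, haS, hamax⟩ : ∃ a ∈ S, ∀ x ∈ S, ¬ a < x := by
        obtain ⟨a, ha⟩ := S.exists_maximal hne
        exact ⟨a, ha.1, fun x hx hlt => lt_irrefl a (lt_of_lt_of_le hlt (ha.2 hx hlt.le))⟩
    by_cases ha0 : a = 0
    · -- then S = {0}
      have hS : S = {0} := by
        apply Finset.eq_singleton_iff_unique_mem.mpr
        refine ⟨ha0 ▸ haS, fun b hb => ?_⟩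
        by_contra hb0
        exact hamax b hb (ha0 ▸ pos_iff_ne_zero.mpr hb0)
      subst hS
      have hfilter : ∀ i : Fin n,
          (({0} : Finset (Fin n →₀ ℕ)).filter
            (fun a => a + Finsupp.single i 1 ∉ ({0} : Finset (Fin n →₀ ℕ)))).card = 1 := by
        intro i
        rw [Finset.filter_singleton, if_pos, Finset.card_singleton]
        rw [zero_add, Finset.mem_singleton]
        exact fun h => one_ne_zero (Finsupp.single_eq_zero.mp h)
      rw [Finset.sum_congr rfl (fun i _ => hfilter i)]
      simp only [Finset.sum_const, Finset.card_univ, Fintype.card_fin, smul_eq_mul, mul_one,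
        Finset.card_singleton]
      omega
    · -- remove the maximal element a
      set S' := S.erase a with hS'
      have haS' : S'.card = S.card - 1 := Finset.card_erase_of_mem haS
      have hScard : 1 ≤ S.card := Finset.card_pos.mpr hne
      have h0S : (0 : Fin n →₀ ℕ) ∈ S := hdc a haS 0 (show (0 : Fin n →₀ ℕ) ≤ a from zero_le)
      have h0S' : (0 : Fin n →₀ ℕ) ∈ S' := Finset.mem_erase.mpr ⟨fun h => ha0 h.symm, h0S⟩
      have hS'ne : S'.Nonempty := ⟨0, h0S'⟩
      have hS'dc : ∀ c ∈ S', ∀ b : Fin n →₀ ℕ, b ≤ c → b ∈ S' := by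
        intro c hc b hbc
        have hcS : c ∈ S := Finset.mem_of_mem_erase hc
        refine Finset.mem_erase.mpr ⟨?_, hdc c hcS b hbc⟩
        rintro rfl
        exact hamax c hcS (lt_of_le_of_ne hbc (Ne.symm (Finset.ne_of_mem_erase hc)))
      have hIH := IH S' (Finset.erase_ssubset haS) hS'ne hS'dc
      -- the per-direction comparison
      have hstep : ∀ i : Fin n,
          (S.filter (fun b => b + Finsupp.single i 1 ∉ S)).card
            ≤ (S'.filter (fun b => b + Finsupp.single i 1 ∉ S')).card
              + (if a i = 0 then 1 else 0) := by
        intro i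
        by_cases hai : a i = 0
        · rw [if_pos hai]
          have hsub : S.filter (fun b => b + Finsupp.single i 1 ∉ S)
              ⊆ insert a (S'.filter (fun b => b + Finsupp.single i 1 ∉ S')) := by
            intro b hb
            rw [Finset.mem_filter] at hb
            rcases eq_or_ne b a with rfl | hba
            · exact Finset.mem_insert_self _ _
            · refine Finset.mem_insert_of_mem (Finset.mem_filter.mpr
                ⟨Finset.mem_erase.mpr ⟨hba, hb.1⟩, fun hmem => hb.2 (Finset.mem_of_mem_erase hmem)⟩)
          calc (S.filter (fun b => b + Finsupp.single i 1 ∉ S)).card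
              ≤ (insert a (S'.filter (fun b => b + Finsupp.single i 1 ∉ S'))).card :=
                Finset.card_le_card hsub
            _ ≤ _ + 1 := Finset.card_insert_le _ _
        · rw [if_neg hai, add_zero]
          have h1ai : 1 ≤ a i := Nat.one_le_iff_ne_zero.mpr hai
          have hcancel : (a - Finsupp.single i 1) + Finsupp.single i 1 = a :=
            tsub_add_cancel_of_le (Finsupp.single_le_iff.mpr h1ai)
          have hane : a - Finsupp.single i 1 ≠ a := by
            intro h
            have := congrArg (fun f : Fin n →₀ ℕ => f i) h
            simp only [Finsupp.tsub_apply, Finsupp.single_eq_same] at this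
            omega
          have hamem : a - Finsupp.single i 1
              ∈ S'.filter (fun b => b + Finsupp.single i 1 ∉ S') := by
            refine Finset.mem_filter.mpr ⟨Finset.mem_erase.mpr
              ⟨hane, hdc a haS _ tsub_le_self⟩, ?_⟩
            rw [hcancel]
            exact Finset.notMem_erase a S
          have hsub : S.filter (fun b => b + Finsupp.single i 1 ∉ S)
              ⊆ insert a ((S'.filter (fun b => b + Finsupp.single i 1 ∉ S')).erase
                (a - Finsupp.single i 1)) := by
            intro b hb
            rw [Finset.mem_filter] at hb
            rcases eq_or_ne b a with rfl | hba
            · exact Finset.mem_insert_self _ _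
            · refine Finset.mem_insert_of_mem (Finset.mem_erase.mpr ⟨?_, Finset.mem_filter.mpr
                ⟨Finset.mem_erase.mpr ⟨hba, hb.1⟩,
                 fun hmem => hb.2 (Finset.mem_of_mem_erase hmem)⟩⟩)
              intro hbeq
              apply hb.2
              rw [hbeq, hcancel]
              exact haS
          have hpos : 1 ≤ (S'.filter (fun b => b + Finsupp.single i 1 ∉ S')).card :=
            Finset.card_pos.mpr ⟨_, hamem⟩
          calc (S.filter (fun b => b + Finsupp.single i 1 ∉ S)).card
              ≤ (insert a ((S'.filter (fun b => b + Finsupp.single i 1 ∉ S')).erase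
                  (a - Finsupp.single i 1))).card := Finset.card_le_card hsub
            _ ≤ ((S'.filter (fun b => b + Finsupp.single i 1 ∉ S')).erase
                  (a - Finsupp.single i 1)).card + 1 := Finset.card_insert_le _ _
            _ = ((S'.filter (fun b => b + Finsupp.single i 1 ∉ S')).card - 1) + 1 := by
                rw [Finset.card_erase_of_mem hamem]
            _ = (S'.filter (fun b => b + Finsupp.single i 1 ∉ S')).card := by omega
      -- count the zero coordinates of a
      obtain ⟨i0, hi0⟩ : ∃ i0, a i0 ≠ 0 := by
        by_contra hc
        push_neg at hc
        exact ha0 (Finsupp.ext hc)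
      have hzero : ∑ i : Fin n, (if a i = 0 then 1 else 0) ≤ n - 1 := by
        have h1 : ∑ i : Fin n, (if a i = 0 then 1 else 0)
            = (Finset.univ.filter (fun i : Fin n => a i = 0)).card :=
          (Finset.card_filter _ _).symm
        rw [h1]
        have h2 : Finset.univ.filter (fun i : Fin n => a i = 0)
            ⊆ Finset.univ.erase i0 := by
          intro j hj
          rw [Finset.mem_filter] at hj
          refine Finset.mem_erase.mpr ⟨?_, Finset.mem_univ j⟩
          rintro rfl
          exact hi0 hj.2
        calc (Finset.univ.filter (fun i : Fin n => a i = 0)).card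
            ≤ (Finset.univ.erase i0).card := Finset.card_le_card h2
          _ = n - 1 := by rw [Finset.card_erase_of_mem (Finset.mem_univ i0),
                Finset.card_univ, Fintype.card_fin]
      calc ∑ i : Fin n, (S.filter (fun b => b + Finsupp.single i 1 ∉ S)).card
          ≤ ∑ i : Fin n, ((S'.filter (fun b => b + Finsupp.single i 1 ∉ S')).card
              + (if a i = 0 then 1 else 0)) := Finset.sum_le_sum (fun i _ => hstep i)
        _ = (∑ i : Fin n, (S'.filter (fun b => b + Finsupp.single i 1 ∉ S')).card)
            + ∑ i : Fin n, (if a i = 0 then 1 else 0) := Finset.sum_add_distrib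
        _ ≤ ((n - 1) * S'.card + 1) + (n - 1) := Nat.add_le_add hIH hzero
        _ = ((n - 1) * (S.card - 1) + (n - 1)) + 1 := by rw [haS']; ring
        _ = (n - 1) * S.card + 1 := by
            congr 1
            have : S.card - 1 + 1 = S.card := Nat.succ_pred_eq_of_pos hScard
            calc (n - 1) * (S.card - 1) + (n - 1) = (n - 1) * ((S.card - 1) + 1) := by ring
              _ = (n - 1) * S.card := by rw [this]

end LC
namespace LC

open MvPolynomial Finset

variable {n : ℕ} {F : Type} [Field F]

/-- The positions of "free columns" of the multiplication matrices. -/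
noncomputable def FreeF (Δ : Finset (Fin n →₀ ℕ)) : Finset ((_ : Fin n) × (Fin n →₀ ℕ)) := by
  classical
  exact Finset.univ.sigma (fun i : Fin n => Δ.filter (fun a => a + Finsupp.single i 1 ∉ Δ))

lemma mem_FreeF {Δ : Finset (Fin n →₀ ℕ)} {i : Fin n} {a : Fin n →₀ ℕ} :
    (⟨i, a⟩ : (_ : Fin n) × (Fin n →₀ ℕ)) ∈ FreeF Δ ↔ a ∈ Δ ∧ a + Finsupp.single i 1 ∉ Δ := by
  classical
  simp [FreeF]

lemma card_FreeF (Δ : Finset (Fin n →₀ ℕ)) :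
    (FreeF Δ).card = ∑ i : Fin n,
      (Δ.filter (fun a => a + Finsupp.single i 1 ∉ Δ)).card := by
  classical
  simp [FreeF, Finset.card_sigma]

/-- The data type in which periodic sequences with given standard monomial set are encoded. -/
abbrev WT {n : ℕ} (Δ : Finset (Fin n →₀ ℕ)) (G : Type) : Type :=
  (↥(FreeF Δ) → ↥Δ → G) × (↥Δ → G)

/-- The encoding of a sequence: free matrix columns plus initial values. -/
noncomputable def encode (s : (Fin n → ℕ) → F) (Δ : Finset (Fin n →₀ ℕ)) : WT Δ F :=
  (fun p a => NN s (p.val.2 + Finsupp.single p.val.1 1) a.val,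
   fun a => s ⇑(a.val))

lemma encode_inj {s s' : (Fin n → ℕ) → F} {Δ : Finset (Fin n →₀ ℕ)}
    (hs : (ΔSet s).Finite) (hs' : (ΔSet s').Finite)
    (hΔ : Δfin s = Δ) (hΔ' : Δfin s' = Δ) (hne : Δ.Nonempty)
    (henc : encode s Δ = encode s' Δ) : s = s' := by
  have hΔset : ΔSet s = ↑Δ := by
    rw [← hΔ, Δfin_eq hs, Set.Finite.coe_toFinset]
  have hΔset' : ΔSet s' = ↑Δ := by
    rw [← hΔ', Δfin_eq hs', Set.Finite.coe_toFinset]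
  have hmem : ∀ {a : Fin n →₀ ℕ}, a ∈ Δ → a ∈ ΔSet s := by
    intro a ha; rw [hΔset]; exact ha
  have hmem' : ∀ {a : Fin n →₀ ℕ}, a ∈ Δ → a ∈ ΔSet s' := by
    intro a ha; rw [hΔset']; exact ha
  have hnotmem : ∀ {a : Fin n →₀ ℕ}, a ∉ Δ → a ∉ ΔSet s := by
    intro a ha h; exact ha (by rwa [hΔset] at h)
  have hnotmem' : ∀ {a : Fin n →₀ ℕ}, a ∉ Δ → a ∉ ΔSet s' := by
    intro a ha h; exact ha (by rwa [hΔset'] at h)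
  have h0 : (0 : Fin n →₀ ℕ) ∈ ΔSet s := zero_mem_ΔSet ⟨hne.choose, hmem hne.choose_spec⟩
  have h0' : (0 : Fin n →₀ ℕ) ∈ ΔSet s' := zero_mem_ΔSet ⟨hne.choose, hmem' hne.choose_spec⟩
  -- the coordinates agree on all monomials
  have key : ∀ d : ℕ, ∀ m : Fin n →₀ ℕ, (∑ i, m i) = d → ∀ b, NN s m b = NN s' m b := by
    intro d
    induction d using Nat.strong_induction_on with
    | _ d IH =>
      intro m hm b
      by_cases hm0 : m = 0
      · subst hm0
        rw [NN_self h0, NN_self h0']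
      · obtain ⟨i, hi⟩ : ∃ i, m i ≠ 0 := by
          by_contra hc
          push_neg at hc
          exact hm0 (Finsupp.ext hc)
        have hsplit : (m - Finsupp.single i 1) + Finsupp.single i 1 = m :=
          tsub_add_cancel_of_le (Finsupp.single_le_iff.mpr (Nat.one_le_iff_ne_zero.mpr hi))
        set m' := m - Finsupp.single i 1 with hm'
        rw [← hsplit, NN_rec hs, NN_rec hs', hΔ, hΔ']
        refine Finset.sum_congr rfl (fun a ha => ?_)
        have hIHa : NN s m' a = NN s' m' a := by
          refine IH (∑ j, m' j) ?_ m' rfl a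
          have hle : ∀ j, m' j ≤ m j := fun j => by
            rw [hm', Finsupp.tsub_apply]; exact Nat.sub_le _ _
          have hlt : m' i < m i := by
            rw [hm', Finsupp.tsub_apply, Finsupp.single_eq_same]; omega
          calc ∑ j, m' j < ∑ j, m j :=
                Finset.sum_lt_sum (fun j _ => hle j) ⟨i, Finset.mem_univ i, hlt⟩
            _ = d := hm
        rw [hIHa]
        congr 1
        -- now compare N (a + e_i) b
        by_cases hin : a + Finsupp.single i 1 ∈ Δ
        · rw [NN_self (hmem hin), NN_self (hmem' hin)]
        · by_cases hb : b ∈ Δ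
          · have hp : (⟨i, a⟩ : (_ : Fin n) × (Fin n →₀ ℕ)) ∈ FreeF Δ :=
              mem_FreeF.mpr ⟨ha, hin⟩
            have := congrFun (congrFun (congrArg Prod.fst henc) ⟨⟨i, a⟩, hp⟩) ⟨b, hb⟩
            exact this
          · rw [NN_of_not_mem (hnotmem hb), NN_of_not_mem (hnotmem' hb)]
  -- conclude
  funext g
  have hg : ⇑(Finsupp.equivFunOnFinite.symm g) = g :=
    Finsupp.equivFunOnFinite.apply_symm_apply g
  set m := Finsupp.equivFunOnFinite.symm g with hmdef
  have h1 : s g = ∑ a ∈ Δ, NN s m a * s ⇑a := by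
    rw [← hg, ← hΔ]; exact s_eq_sum_NN hs m
  have h2 : s' g = ∑ a ∈ Δ, NN s' m a * s' ⇑a := by
    rw [← hg, ← hΔ']; exact s_eq_sum_NN hs' m
  rw [h1, h2]
  refine Finset.sum_congr rfl (fun a ha => ?_)
  rw [key (∑ j, m j) m rfl a]
  congr 1
  exact congrFun (congrArg Prod.snd henc) ⟨a, ha⟩

end LC
namespace LC

open MvPolynomial Finset

variable {n : ℕ} {F : Type} [Field F]

lemma ncard_biUnion_le {α β : Type*} (t : Finset α) (f : α → Set β) :
    (⋃ a ∈ t, f a).ncard ≤ ∑ a ∈ t, (f a).ncard := by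
  classical
  induction t using Finset.induction with
  | empty => simp
  | @insert a t ha IH =>
    rw [Finset.sum_insert ha]
    have h : (⋃ x ∈ insert a t, f x) = f a ∪ ⋃ x ∈ t, f x := by
      simp [Set.biUnion_insert]
    rw [h]
    calc (f a ∪ ⋃ x ∈ t, f x).ncard ≤ (f a).ncard + (⋃ x ∈ t, f x).ncard :=
          Set.ncard_union_le _ _
      _ ≤ (f a).ncard + ∑ x ∈ t, (f x).ncard := Nat.add_le_add_left IH _

section Counting

variable [Fintype F]

lemma SΔ_finite (Δ : Finset (Fin n →₀ ℕ)) (hne : Δ.Nonempty) :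
    ({s : (Fin n → ℕ) → F | (ΔSet s).Finite ∧ Δfin s = Δ}).Finite := by
  classical
  apply Set.Finite.of_finite_image (f := fun s => encode s Δ)
  · exact Set.Finite.subset Set.finite_univ (Set.subset_univ _)
  · rintro s ⟨hs, hΔs⟩ s' ⟨hs', hΔs'⟩ h
    exact encode_inj hs hs' hΔs hΔs' hne h

lemma ncard_SΔ_le {K : ℕ} (hK : 1 ≤ K) (Δ : Finset (Fin n →₀ ℕ)) (hΔcard : Δ.card = K) :
    ({s : (Fin n → ℕ) → F | (ΔSet s).Finite ∧ Δfin s = Δ}).ncard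
      ≤ (Fintype.card F) ^ (K * (FreeF Δ).card + K) := by
  classical
  set S := {s : (Fin n → ℕ) → F | (ΔSet s).Finite ∧ Δfin s = Δ} with hS
  have hne : Δ.Nonempty := Finset.card_pos.mp (by omega)
  have hinj : Set.InjOn (fun s => encode s Δ) S := by
    rintro s ⟨hs, hΔs⟩ s' ⟨hs', hΔs'⟩ h
    exact encode_inj hs hs' hΔs hΔs' hne h
  calc S.ncard = ((fun s => encode s Δ) '' S).ncard :=
        (Set.ncard_image_of_injOn hinj).symm
    _ ≤ (Set.univ : Set (WT Δ F)).ncard :=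
        Set.ncard_le_ncard (Set.subset_univ _) Set.finite_univ
    _ = Nat.card (WT Δ F) := Set.ncard_univ _
    _ = (Fintype.card F) ^ (K * (FreeF Δ).card + K) := by
        rw [Nat.card_eq_fintype_card]
        rw [Fintype.card_prod, Fintype.card_fun, Fintype.card_fun,
          Fintype.card_coe, Fintype.card_coe, hΔcard]
        rw [← pow_mul, ← pow_add]

end Counting

open Classical in
/-- The candidate standard monomial sets: downward closed `K`-element subsets of the
`K × ⋯ × K` box. -/
noncomputable def cand (n K : ℕ) : Finset (Finset (Fin n →₀ ℕ)) :=
  ((((Fintype.piFinset (fun _ : Fin n => Finset.range K)).image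
      (Finsupp.equivFunOnFinite.symm)).powersetCard K).filter
    (fun Δ => ∀ a ∈ Δ, ∀ b : Fin n →₀ ℕ, b ≤ a → b ∈ Δ))

lemma card_cand (n K : ℕ) : (cand n K).card ≤ (K ^ n).choose K := by
  classical
  have h1 : (cand n K).card
      ≤ ((((Fintype.piFinset (fun _ : Fin n => Finset.range K)).image
        (Finsupp.equivFunOnFinite.symm)).powersetCard K)).card := by
    apply Finset.card_le_card
    intro Δ hΔ
    rw [cand, Finset.mem_filter] at hΔ
    exact hΔ.1
  rw [Finset.card_powersetCard] at h1
  have h2 : (((Fintype.piFinset (fun _ : Fin n => Finset.range K)).image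
      (Finsupp.equivFunOnFinite.symm))).card = K ^ n := by
    rw [Finset.card_image_of_injective _ (Finsupp.equivFunOnFinite.symm.injective),
      Fintype.card_piFinset]
    simp [Finset.card_range]
  rw [h2] at h1
  exact h1

lemma mem_cand {s : (Fin n → ℕ) → F} (h : (ΔSet s).Finite) {K : ℕ}
    (hK : (Δfin s).card = K) : Δfin s ∈ cand n K := by
  classical
  rw [cand, Finset.mem_filter]
  constructor
  · rw [Finset.mem_powersetCard]
    refine ⟨?_, hK⟩
    intro a ha
    rw [Finset.mem_image]
    refine ⟨⇑a, ?_, Finsupp.equivFunOnFinite_symm_coe a⟩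
    rw [Fintype.mem_piFinset]
    intro i
    rw [Finset.mem_range]
    rw [mem_Δfin_iff h] at ha
    exact hK ▸ coord_lt_card h ha i
  · intro a ha b hba
    rw [mem_Δfin_iff h] at ha ⊢
    exact ΔSet_downclosed s ha hba

lemma FreeF_card_le {K : ℕ} (hn : 1 ≤ n) (hK : 1 ≤ K) {Δ : Finset (Fin n →₀ ℕ)}
    (hΔ : Δ ∈ cand n K) : (FreeF Δ).card ≤ (n - 1) * K + 1 := by
  classical
  rw [cand, Finset.mem_filter, Finset.mem_powersetCard] at hΔ
  have hcard : Δ.card = K := hΔ.1.2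
  have hne : Δ.Nonempty := Finset.card_pos.mp (by omega)
  rw [card_FreeF]
  calc ∑ i : Fin n, (Δ.filter (fun a => a + Finsupp.single i 1 ∉ Δ)).card
      ≤ (n - 1) * Δ.card + 1 := downset_bound hn Δ hne hΔ.2
    _ = (n - 1) * K + 1 := by rw [hcard]

/-- The natural-number counting bound for `K ≥ 1`. -/
lemma count_bound [Fintype F] (hn : 1 ≤ n) {T : Fin n → ℕ} (hT : ∀ i, 0 < T i)
    {K : ℕ} (hK : 1 ≤ K) :
    ({s : (Fin n → ℕ) → F | IsPeriodic T s ∧ linComp s = K}).ncard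
      ≤ (K ^ n).choose K * (Fintype.card F) ^ (K * ((n - 1) * K + 1) + K) := by
  classical
  set U := ⋃ Δ ∈ cand n K, {s : (Fin n → ℕ) → F | (ΔSet s).Finite ∧ Δfin s = Δ} with hU
  have hsub : {s : (Fin n → ℕ) → F | IsPeriodic T s ∧ linComp s = K} ⊆ U := by
    intro s hs
    haveI := finite_of_periodic hT hs.1
    have hfin := ΔSet_finite s
    have hcard : (Δfin s).card = K := by rw [card_Δfin]; exact hs.2
    exact Set.mem_biUnion (mem_cand hfin hcard) ⟨hfin, rfl⟩
  have hcandne : ∀ Δ ∈ cand n K, Δ.Nonempty := by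
    intro Δ hΔ
    rw [cand, Finset.mem_filter, Finset.mem_powersetCard] at hΔ
    exact Finset.card_pos.mp (by omega)
  have hUfin : U.Finite := by
    rw [hU]
    apply Set.Finite.biUnion (Finset.finite_toSet _)
    intro Δ hΔ
    exact SΔ_finite Δ (hcandne Δ (by simpa using hΔ))
  calc ({s : (Fin n → ℕ) → F | IsPeriodic T s ∧ linComp s = K}).ncard
      ≤ U.ncard := Set.ncard_le_ncard hsub hUfin
    _ ≤ ∑ Δ ∈ cand n K, ({s : (Fin n → ℕ) → F | (ΔSet s).Finite ∧ Δfin s = Δ}).ncard :=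
        ncard_biUnion_le _ _
    _ ≤ ∑ _Δ ∈ cand n K, (Fintype.card F) ^ (K * ((n - 1) * K + 1) + K) := by
        apply Finset.sum_le_sum
        intro Δ hΔ
        have hΔcard : Δ.card = K := by
          rw [cand, Finset.mem_filter, Finset.mem_powersetCard] at hΔ
          exact hΔ.1.2
        calc ({s : (Fin n → ℕ) → F | (ΔSet s).Finite ∧ Δfin s = Δ}).ncard
            ≤ (Fintype.card F) ^ (K * (FreeF Δ).card + K) := ncard_SΔ_le hK Δ hΔcard
          _ ≤ (Fintype.card F) ^ (K * ((n - 1) * K + 1) + K) := by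
              apply Nat.pow_le_pow_right Fintype.card_pos
              have := FreeF_card_le hn hK hΔ
              nlinarith
    _ = (cand n K).card * (Fintype.card F) ^ (K * ((n - 1) * K + 1) + K) := by
        rw [Finset.sum_const, smul_eq_mul]
    _ ≤ (K ^ n).choose K * (Fintype.card F) ^ (K * ((n - 1) * K + 1) + K) :=
        Nat.mul_le_mul_right _ (card_cand n K)

/-- The `K = 0` case: only the zero sequence. -/
lemma count_bound_zero [Fintype F] {T : Fin n → ℕ} (hT : ∀ i, 0 < T i) :
    ({s : (Fin n → ℕ) → F | IsPeriodic T s ∧ linComp s = 0}).ncard ≤ 1 := by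
  classical
  have hsub : {s : (Fin n → ℕ) → F | IsPeriodic T s ∧ linComp s = 0}
      ⊆ {(fun _ => 0 : (Fin n → ℕ) → F)} := by
    intro s hs
    haveI := finite_of_periodic hT hs.1
    have h0 : Subsingleton (QS s) := by
      have := hs.2
      rw [show linComp s = Module.finrank F (QS s) from rfl] at this
      exact Module.finrank_zero_iff.mp this
    have h1 : (1 : MvPolynomial (Fin n) F) ∈ seqIdeal s := by
      rw [← Ideal.Quotient.eq_zero_iff_mem]
      exact Subsingleton.elim _ _
    have h2 : ∀ m : Fin n → ℕ, recSum s 1 m = 0 := h1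
    simp only [Set.mem_singleton_iff]
    funext g
    have h3 := h2 g
    rw [show (1 : MvPolynomial (Fin n) F) = monomial 0 1 by
      rw [MvPolynomial.monomial_zero']; rfl] at h3
    rw [recSum_monomial] at h3
    simpa using h3
  calc _ ≤ ({(fun _ => 0 : (Fin n → ℕ) → F)} : Set ((Fin n → ℕ) → F)).ncard :=
        Set.ncard_le_ncard hsub (Set.finite_singleton _)
    _ = 1 := Set.ncard_singleton _

end LC
namespace LC

open Filter Real

lemma eventually_choose_le (n : ℕ) (hn : 1 ≤ n) :
    ∃ K₀ : ℕ, 1 ≤ K₀ ∧ ∀ K : ℕ, K₀ ≤ K →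
      ((K ^ n).choose K : ℝ) ≤ (2 : ℝ) ^ ((K : ℝ) ^ ((3 : ℝ) / 2)) := by
  have hlog2 : (0 : ℝ) < Real.log 2 := Real.log_pos (by norm_num)
  have hc : (0 : ℝ) < Real.log 2 / n := by positivity
  have hoo := isLittleO_log_rpow_atTop (r := (1 : ℝ) / 2) (by norm_num)
  have hev := hoo.def hc
  rw [Filter.eventually_atTop] at hev
  obtain ⟨x₀, hx₀⟩ := hev
  obtain ⟨K₀', hK₀'⟩ := exists_nat_ge x₀
  refine ⟨max K₀' 1, le_max_right _ 1, ?_⟩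
  intro K hK
  have hK1 : 1 ≤ K := le_trans (le_max_right _ 1) hK
  have hKR : (1 : ℝ) ≤ (K : ℝ) := by exact_mod_cast hK1
  have hKpos : (0 : ℝ) < (K : ℝ) := by linarith
  have hKx₀ : x₀ ≤ (K : ℝ) := by
    calc x₀ ≤ (K₀' : ℝ) := hK₀'
      _ ≤ (K : ℝ) := by
          exact_mod_cast le_trans (le_max_left K₀' 1) hK
  have hlog := hx₀ (K : ℝ) hKx₀
  rw [Real.norm_eq_abs, Real.norm_eq_abs, abs_of_nonneg (Real.log_nonneg hKR),
    abs_of_nonneg (Real.rpow_nonneg (le_of_lt hKpos) _)] at hlog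
  -- first: choose ≤ (K^n)^K = K^(n*K) as reals
  have h1 : ((K ^ n).choose K : ℝ) ≤ ((K : ℝ) ^ (n * K) : ℝ) := by
    calc ((K ^ n).choose K : ℝ) ≤ ((K ^ n : ℕ) ^ K : ℝ) / (Nat.factorial K) :=
          Nat.choose_le_pow_div K (K ^ n)
      _ ≤ ((K ^ n : ℕ) ^ K : ℝ) := by
          apply div_le_self (by positivity)
          exact_mod_cast Nat.one_le_iff_ne_zero.mpr (Nat.factorial_ne_zero K)
      _ = (K : ℝ) ^ (n * K) := by
          push_cast
          rw [← pow_mul]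
  -- second: K^(n*K) ≤ 2^(K^(3/2))
  have h2 : ((K : ℝ) ^ (n * K) : ℝ) ≤ (2 : ℝ) ^ ((K : ℝ) ^ ((3 : ℝ) / 2)) := by
    have hpow : ((K : ℝ) ^ (n * K) : ℝ) = Real.exp ((n * K : ℝ) * Real.log K) := by
      rw [← Real.rpow_natCast (K : ℝ) (n * K), Real.rpow_def_of_pos hKpos]
      push_cast
      ring_nf
    have hpow2 : (2 : ℝ) ^ ((K : ℝ) ^ ((3 : ℝ) / 2))
        = Real.exp (((K : ℝ) ^ ((3 : ℝ) / 2)) * Real.log 2) := by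
      rw [Real.rpow_def_of_pos (by norm_num : (0:ℝ) < 2)]
      ring_nf
    rw [hpow, hpow2, Real.exp_le_exp]
    have hK32 : (K : ℝ) ^ ((3 : ℝ) / 2) = (K : ℝ) * (K : ℝ) ^ ((1 : ℝ) / 2) := by
      rw [show ((3 : ℝ) / 2) = 1 + (1 : ℝ) / 2 by norm_num,
        Real.rpow_add hKpos, Real.rpow_one]
    have hn' : (1 : ℝ) ≤ (n : ℝ) := by exact_mod_cast hn
    have hstep : (n : ℝ) * Real.log K ≤ Real.log 2 * (K : ℝ) ^ ((1 : ℝ) / 2) := by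
      calc (n : ℝ) * Real.log K ≤ (n : ℝ) * (Real.log 2 / n * (K : ℝ) ^ ((1 : ℝ) / 2)) := by
            apply mul_le_mul_of_nonneg_left hlog (by positivity)
        _ = Real.log 2 * (K : ℝ) ^ ((1 : ℝ) / 2) := by
            field_simp
    calc (n * K : ℝ) * Real.log K = (K : ℝ) * ((n : ℝ) * Real.log K) := by ring
      _ ≤ (K : ℝ) * (Real.log 2 * (K : ℝ) ^ ((1 : ℝ) / 2)) :=
          mul_le_mul_of_nonneg_left hstep (le_of_lt hKpos)
      _ = ((K : ℝ) ^ ((3 : ℝ) / 2)) * Real.log 2 := by rw [hK32]; ring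
  exact le_trans h1 h2

lemma exists_const (n : ℕ) (hn : 1 ≤ n) :
    ∃ c : ℝ, 1 ≤ c ∧ ∀ K : ℕ,
      ((K ^ n).choose K : ℝ) ≤ c * (2 : ℝ) ^ ((K : ℝ) ^ ((3 : ℝ) / 2)) := by
  obtain ⟨K₀, hK₀1, hK₀⟩ := eventually_choose_le n hn
  refine ⟨1 + ∑ j ∈ Finset.range K₀, ((j ^ n).choose j : ℝ), ?_, ?_⟩
  · have : (0 : ℝ) ≤ ∑ j ∈ Finset.range K₀, ((j ^ n).choose j : ℝ) :=
      Finset.sum_nonneg (fun j _ => by positivity)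
    linarith
  · intro K
    set c := 1 + ∑ j ∈ Finset.range K₀, ((j ^ n).choose j : ℝ) with hc
    have hcpos : (1 : ℝ) ≤ c := by
      have : (0 : ℝ) ≤ ∑ j ∈ Finset.range K₀, ((j ^ n).choose j : ℝ) :=
        Finset.sum_nonneg (fun j _ => by positivity)
      rw [hc]; linarith
    have hrpow1 : (1 : ℝ) ≤ (2 : ℝ) ^ ((K : ℝ) ^ ((3 : ℝ) / 2)) :=
      Real.one_le_rpow (by norm_num) (Real.rpow_nonneg (Nat.cast_nonneg K) _)
    by_cases hK : K₀ ≤ K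
    · calc ((K ^ n).choose K : ℝ) ≤ (2 : ℝ) ^ ((K : ℝ) ^ ((3 : ℝ) / 2)) := hK₀ K hK
        _ = 1 * (2 : ℝ) ^ ((K : ℝ) ^ ((3 : ℝ) / 2)) := (one_mul _).symm
        _ ≤ c * (2 : ℝ) ^ ((K : ℝ) ^ ((3 : ℝ) / 2)) :=
            mul_le_mul_of_nonneg_right hcpos (by linarith)
    · push_neg at hK
      have hmem : ((K ^ n).choose K : ℝ) ≤ ∑ j ∈ Finset.range K₀, ((j ^ n).choose j : ℝ) :=
        Finset.single_le_sum (f := fun j => ((j ^ n).choose j : ℝ))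
          (fun j _ => by positivity) (Finset.mem_range.mpr hK)
      calc ((K ^ n).choose K : ℝ) ≤ c := by rw [hc]; linarith
        _ = c * 1 := (mul_one c).symm
        _ ≤ c * (2 : ℝ) ^ ((K : ℝ) ^ ((3 : ℝ) / 2)) :=
            mul_le_mul_of_nonneg_left hrpow1 (by linarith)

end LC
/-- There is a constant `c` depending only on `n` and `q` such that for all periods
`(T_1,…,T_n)` and all `K ≥ 0`, the number of `(T_1,…,T_n)`-periodic sequences with linear
complexity exactly `K` is at most `c · q^{(n-1)K² + K^{3/2} + 2K}`. -/
theorem statement_13 {n : ℕ} (hn : 2 ≤ n) {F : Type} [Field F] [Fintype F]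
    (q : ℕ) (hq : Fintype.card F = q) :
    ∃ c : ℝ, ∀ T : Fin n → ℕ, (∀ i, 0 < T i) → ∀ K : ℕ,
      ({s : (Fin n → ℕ) → F | IsPeriodic T s ∧ linComp s = K}.ncard : ℝ)
        ≤ c * (q : ℝ) ^ (((n : ℝ) - 1) * K ^ 2 + (K : ℝ) ^ ((3 : ℝ) / 2) + 2 * K) := by
  have hn1 : 1 ≤ n := by omega
  obtain ⟨c, hc1, hc⟩ := LC.exists_const n hn1
  refine ⟨c, ?_⟩
  intro T hT K
  have hq2 : 2 ≤ q := by rw [← hq]; exact Fintype.one_lt_card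
  have hqR : (2 : ℝ) ≤ (q : ℝ) := by exact_mod_cast hq2
  have hqpos : (0 : ℝ) < (q : ℝ) := by linarith
  have hq1R : (1 : ℝ) ≤ (q : ℝ) := by linarith
  rcases Nat.eq_zero_or_pos K with rfl | hK
  · -- K = 0 : at most the zero sequence
    have h0 := LC.count_bound_zero (F := F) hT
    have hexp : ((n : ℝ) - 1) * ((0 : ℕ) : ℝ) ^ 2 + (((0 : ℕ) : ℝ)) ^ ((3 : ℝ) / 2)
        + 2 * ((0 : ℕ) : ℝ) = 0 := by
      rw [Nat.cast_zero, Real.zero_rpow (by norm_num)]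
      ring
    rw [hexp, Real.rpow_zero, mul_one]
    calc ({s : (Fin n → ℕ) → F | IsPeriodic T s ∧ linComp s = 0}.ncard : ℝ) ≤ 1 := by
          exact_mod_cast h0
      _ ≤ c := hc1
  · -- K ≥ 1
    have hcount := LC.count_bound (F := F) hn1 hT hK
    set E₁ : ℕ := K * ((n - 1) * K + 1) + K with hE₁
    have hcast : (({s : (Fin n → ℕ) → F | IsPeriodic T s ∧ linComp s = K}).ncard : ℝ)
        ≤ ((K ^ n).choose K : ℝ) * ((q : ℝ) ^ (E₁ : ℕ)) := by
      rw [← hq]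
      exact_mod_cast hcount
    have hE₁R : ((E₁ : ℕ) : ℝ) = ((n : ℝ) - 1) * (K : ℝ) ^ 2 + 2 * (K : ℝ) := by
      have hsub : ((n - 1 : ℕ) : ℝ) = (n : ℝ) - 1 := by
        rw [Nat.cast_sub hn1, Nat.cast_one]
      rw [hE₁]
      push_cast [hsub]
      ring
    have hbase : (2 : ℝ) ^ ((K : ℝ) ^ ((3 : ℝ) / 2)) ≤ (q : ℝ) ^ ((K : ℝ) ^ ((3 : ℝ) / 2)) :=
      Real.rpow_le_rpow (by norm_num) hqR (Real.rpow_nonneg (Nat.cast_nonneg K) _)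
    have hq32nonneg : (0 : ℝ) ≤ (q : ℝ) ^ ((K : ℝ) ^ ((3 : ℝ) / 2)) :=
      Real.rpow_nonneg (le_of_lt hqpos) _
    have hexp_eq : (K : ℝ) ^ ((3 : ℝ) / 2) + ((E₁ : ℕ) : ℝ)
        = ((n : ℝ) - 1) * (K : ℝ) ^ 2 + (K : ℝ) ^ ((3 : ℝ) / 2) + 2 * (K : ℝ) := by
      rw [hE₁R]; ring
    calc (({s : (Fin n → ℕ) → F | IsPeriodic T s ∧ linComp s = K}).ncard : ℝ)
        ≤ ((K ^ n).choose K : ℝ) * ((q : ℝ) ^ (E₁ : ℕ)) := hcast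
      _ ≤ (c * (2 : ℝ) ^ ((K : ℝ) ^ ((3 : ℝ) / 2))) * ((q : ℝ) ^ (E₁ : ℕ)) :=
          mul_le_mul_of_nonneg_right (hc K) (by positivity)
      _ ≤ (c * (q : ℝ) ^ ((K : ℝ) ^ ((3 : ℝ) / 2))) * ((q : ℝ) ^ (E₁ : ℕ)) := by
          apply mul_le_mul_of_nonneg_right _ (by positivity)
          exact mul_le_mul_of_nonneg_left hbase (by linarith)
      _ = c * ((q : ℝ) ^ ((K : ℝ) ^ ((3 : ℝ) / 2)) * (q : ℝ) ^ (((E₁ : ℕ) : ℝ))) := by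
          rw [Real.rpow_natCast]
          ring
      _ = c * (q : ℝ) ^ ((K : ℝ) ^ ((3 : ℝ) / 2) + ((E₁ : ℕ) : ℝ)) := by
          rw [← Real.rpow_add hqpos]
      _ = c * (q : ℝ) ^ (((n : ℝ) - 1) * (K : ℝ) ^ 2 + (K : ℝ) ^ ((3 : ℝ) / 2) + 2 * (K : ℝ)) := by
          rw [hexp_eq]
end

section
/- Let n ≥ 2 and let q be a prime power. For any real numbers ε_1, ε_2 > 0 there exists a constant C (depending on ε_1, ε_2, n, q) such that for every n-tuple (T_1,...,T_n) of positive integers with T_1⋯T_n > C, the number of sequences s : ℕⁿ → F_q that are periodic with period (T_1,...,T_n) and satisfy L(s) > √((1−ε_1)·T_1⋯T_n/(n−1)) is strictly greater than (1 − ε_2) · q^{T_1⋯T_n}. -/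
open MvPolynomial

section Aux

variable {n : ℕ} {F : Type} [Field F]

lemma recSum_add (s : (Fin n → ℕ) → F) (P Q : MvPolynomial (Fin n) F) (m : Fin n → ℕ) :
    recSum s (P + Q) m = recSum s P m + recSum s Q m := by
  have h : recSum s (P + Q) m
      = ∑ j ∈ P.support ∪ Q.support, (P + Q).coeff j * s (fun i => m i + j i) :=
    (recSum_superset s (P + Q) m (MvPolynomial.support_add)).symm
  rw [h]
  simp only [MvPolynomial.coeff_add, add_mul]
  rw [Finset.sum_add_distrib,
    recSum_superset s P m Finset.subset_union_left,
    recSum_superset s Q m Finset.subset_union_right]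

lemma recSum_neg (s : (Fin n → ℕ) → F) (P : MvPolynomial (Fin n) F) (m : Fin n → ℕ) :
    recSum s (-P) m = -recSum s P m := by
  unfold recSum
  rw [MvPolynomial.support_neg, ← Finset.sum_neg_distrib]
  exact Finset.sum_congr rfl (fun j _ => by rw [MvPolynomial.coeff_neg, neg_mul])

lemma recSum_sub (s : (Fin n → ℕ) → F) (P Q : MvPolynomial (Fin n) F) (m : Fin n → ℕ) :
    recSum s (P - Q) m = recSum s P m - recSum s Q m := by
  rw [sub_eq_add_neg, recSum_add, recSum_neg, sub_eq_add_neg]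

lemma recSum_monomial (s : (Fin n → ℕ) → F) (j : Fin n →₀ ℕ) (c : F) (m : Fin n → ℕ) :
    recSum s (MvPolynomial.monomial j c) m = c * s (fun i => m i + j i) := by
  by_cases hc : c = 0
  · subst hc; simp [recSum]
  · unfold recSum
    classical
    rw [MvPolynomial.support_monomial, if_neg hc, Finset.sum_singleton,
      MvPolynomial.coeff_monomial, if_pos rfl]

lemma recSum_X_pow_sub_one (s : (Fin n → ℕ) → F) (i : Fin n) (t : ℕ) (m : Fin n → ℕ) :
    recSum s ((MvPolynomial.X i : MvPolynomial (Fin n) F) ^ t - 1) m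
      = s (fun k => m k + (if k = i then t else 0)) - s m := by
  have h1 : (MvPolynomial.X i : MvPolynomial (Fin n) F) ^ t
      = MvPolynomial.monomial (Finsupp.single i t) 1 := by
    rw [MvPolynomial.X_pow_eq_monomial]
  have h2 : (1 : MvPolynomial (Fin n) F) = MvPolynomial.monomial 0 1 := by
    simp [MvPolynomial.monomial_zero']
  rw [h1, h2, recSum_sub, recSum_monomial, recSum_monomial]
  have e1 : (fun k => m k + (Finsupp.single i t) k) = fun k => m k + (if k = i then t else 0) := by
    funext k; rw [Finsupp.single_apply]
    by_cases h : k = i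
    · simp [h]
    · simp [h, Ne.symm h]
  have e2 : (fun k => m k + (0 : Fin n →₀ ℕ) k) = m := by funext k; simp
  rw [e1, e2, one_mul, one_mul]

/-- A periodic sequence satisfies `s(m + T_i e_i) = s m`. -/
lemma periodic_step {T : Fin n → ℕ} {s : (Fin n → ℕ) → F} (hs : IsPeriodic T s)
    (i : Fin n) (m : Fin n → ℕ) :
    s (fun k => m k + (if k = i then T i else 0)) = s m := by
  have := hs i m
  rw [recSum_X_pow_sub_one, sub_eq_zero] at this
  exact this

/-- A periodic sequence is determined by its values in the box. -/
lemma periodic_apply_mod {T : Fin n → ℕ} {s : (Fin n → ℕ) → F} (hs : IsPeriodic T s)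
    (hT : ∀ i, 0 < T i) (m : Fin n → ℕ) :
    s m = s (fun i => m i % T i) := by
  -- strong induction on ∑ m i
  have key : ∀ N : ℕ, ∀ m : Fin n → ℕ, (∑ i, m i) ≤ N → s m = s (fun i => m i % T i) := by
    intro N
    induction N with
    | zero =>
      intro m hm
      have : ∀ i, m i = 0 := by
        intro i
        have := Finset.single_le_sum (f := m) (fun i _ => Nat.zero_le _) (Finset.mem_univ i)
        omega
      have : (fun i => m i % T i) = m := by
        funext i; rw [this i]; simp
      rw [this]
    | succ N ih =>
      intro m hm
      by_cases hbox : ∀ i, m i < T i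
      · have : (fun i => m i % T i) = m := by
          funext i; exact Nat.mod_eq_of_lt (hbox i)
        rw [this]
      · push_neg at hbox
        obtain ⟨i₀, hi₀⟩ := hbox
        set m' : Fin n → ℕ := fun k => if k = i₀ then m k - T i₀ else m k with hm'
        have hmm' : m = fun k => m' k + (if k = i₀ then T i₀ else 0) := by
          funext k
          by_cases h : k = i₀
          · subst h; simp [hm']; omega
          · simp [hm', h]
        have h1 : s m = s m' := by
          conv_lhs => rw [hmm']
          exact periodic_step hs i₀ m'
        have hsum : (∑ i, m' i) ≤ N := by
          have hlt : (∑ i, m' i) < ∑ i, m i := by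
            apply Finset.sum_lt_sum
            · intro k _
              by_cases h : k = i₀ <;> simp [hm', h] <;> omega
            · exact ⟨i₀, Finset.mem_univ _, by simp [hm']; have := hT i₀; omega⟩
          omega
        have h2 : s m' = s (fun i => m' i % T i) := ih m' hsum
        have h3 : (fun i => m' i % T i) = (fun i => m i % T i) := by
          funext k
          by_cases h : k = i₀
          · subst h
            simp only [hm', if_pos rfl]
            conv_rhs => rw [Nat.mod_eq_sub_mod hi₀]
          · simp [hm', h]
        rw [h1, h2, h3]
  exact key (∑ i, m i) m le_rfl

end Aux


section Aux2

variable {n : ℕ} {F : Type} [Field F]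

/-- Extending a function on the box periodically gives a periodic sequence. -/
lemma isPeriodic_of_mod {T : Fin n → ℕ} (f : (Fin n → ℕ) → F) :
    IsPeriodic T (fun m => f (fun i => m i % T i)) := by
  intro i m
  rw [recSum_X_pow_sub_one]
  have : (fun k => (m k + if k = i then T i else 0) % T k) = fun k => m k % T k := by
    funext k
    by_cases h : k = i
    · subst h; simp [Nat.add_mod_right]
    · simp [h]
  rw [this, sub_self]

/-- Injectivity of base-`B` representations. -/
lemma digits_inj (B : ℕ) : ∀ (k : ℕ) (f g : ℕ → ℕ), (∀ j, f j < B) → (∀ j, g j < B) →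
    (∑ j ∈ Finset.range k, f j * B ^ j) = (∑ j ∈ Finset.range k, g j * B ^ j) →
    ∀ j < k, f j = g j := by
  intro k
  induction k with
  | zero => intro f g _ _ _ j hj; omega
  | succ k ih =>
    intro f g hf hg hsum j hj
    have hB : 0 < B := lt_of_le_of_lt (Nat.zero_le _) (hf 0)
    have expand : ∀ h : ℕ → ℕ, (∑ j ∈ Finset.range (k+1), h j * B ^ j)
        = h 0 + B * ∑ j ∈ Finset.range k, h (j+1) * B ^ j := by
      intro h
      rw [Finset.sum_range_succ', Finset.mul_sum, pow_zero, mul_one, add_comm]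
      congr 1
      exact Finset.sum_congr rfl (fun j _ => by ring)
    rw [expand f, expand g] at hsum
    have h0 : f 0 = g 0 := by
      have h1 := congrArg (· % B) hsum
      simpa [Nat.add_mul_mod_self_left, Nat.mod_eq_of_lt (hf 0), Nat.mod_eq_of_lt (hg 0)] using h1
    have htail : (∑ j ∈ Finset.range k, f (j+1) * B ^ j) = ∑ j ∈ Finset.range k, g (j+1) * B ^ j := by
      have := hsum
      rw [h0] at this
      have h2 : B * (∑ j ∈ Finset.range k, f (j+1) * B ^ j)
          = B * ∑ j ∈ Finset.range k, g (j+1) * B ^ j := by omega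
      exact Nat.eq_of_mul_eq_mul_left hB h2
    rcases Nat.eq_zero_or_pos j with hj0 | hjpos
    · subst hj0; exact h0
    · have := ih (fun j => f (j+1)) (fun j => g (j+1)) (fun j => hf _) (fun j => hg _) htail (j-1) (by omega)
      simpa [Nat.sub_add_cancel hjpos] using this

/-- The weight function used to order monomials. -/
def wt (B : ℕ) (m : Fin n → ℕ) : ℕ := ∑ i, m i * B ^ (i : ℕ)

lemma wt_inj {B : ℕ} (hB : 0 < B) {a b : Fin n → ℕ} (ha : ∀ i, a i < B) (hb : ∀ i, b i < B)
    (h : wt B a = wt B b) : a = b := by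
  classical
  set a' : ℕ → ℕ := fun j => if h : j < n then a ⟨j, h⟩ else 0 with ha'
  set b' : ℕ → ℕ := fun j => if h : j < n then b ⟨j, h⟩ else 0 with hb'
  have hwa : wt B a = ∑ j ∈ Finset.range n, a' j * B ^ j := by
    rw [Finset.sum_range fun j => a' j * B ^ j]
    unfold wt
    exact Finset.sum_congr rfl (fun i _ => by simp [ha', i.isLt])
  have hwb : wt B b = ∑ j ∈ Finset.range n, b' j * B ^ j := by
    rw [Finset.sum_range fun j => b' j * B ^ j]
    unfold wt
    exact Finset.sum_congr rfl (fun i _ => by simp [hb', i.isLt])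
  have key := digits_inj B n a' b'
    (fun j => by by_cases hj : j < n <;> simp [ha', hj, ha, hB])
    (fun j => by by_cases hj : j < n <;> simp [hb', hj, hb, hB])
    (by rw [← hwa, ← hwb, h])
  funext i
  have := key i i.isLt
  simpa [ha', hb', i.isLt] using this

lemma wt_le_wt {B : ℕ} {a b : Fin n → ℕ} (h : ∀ i, a i ≤ b i) : wt B a ≤ wt B b :=
  Finset.sum_le_sum (fun i _ => Nat.mul_le_mul_right _ (h i))

lemma wt_add_eq {B : ℕ} (a b : Fin n → ℕ) : wt B (fun i => a i + b i) = wt B a + wt B b := by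
  unfold wt
  rw [← Finset.sum_add_distrib]
  exact Finset.sum_congr rfl (fun i _ => by ring)

end Aux2


section Det

variable {n : ℕ} {F : Type} [Field F]

/-- Two periodic sequences satisfying a common recurrence supported in the box `∏ [0, g_i)`
and agreeing on the part of the period box where some coordinate is `< g_i - 1` are equal. -/
lemma determined (hn : 0 < n) {T g : Fin n → ℕ} {s s' : (Fin n → ℕ) → F}
    (hT : ∀ i, 0 < T i) (hg : ∀ i, 0 < g i)
    (hs : IsPeriodic T s) (hs' : IsPeriodic T s')
    {Q : MvPolynomial (Fin n) F} (hQ0 : Q ≠ 0)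
    (hQs : Q ∈ seqIdeal s) (hQs' : Q ∈ seqIdeal s')
    (hsupp : ∀ d ∈ Q.support, ∀ i, (d : Fin n →₀ ℕ) i < g i)
    (hagree : ∀ m : Fin n → ℕ, (∀ i, m i < T i) → (∃ i, m i + 1 < g i) → s m = s' m) :
    s = s' := by
  classical
  set B : ℕ := Finset.univ.sup g with hBdef
  have hgB : ∀ i, g i ≤ B := fun i => Finset.le_sup (Finset.mem_univ i)
  have hB : 0 < B := lt_of_lt_of_le (hg ⟨0, hn⟩) (hgB ⟨0, hn⟩)
  -- choose the maximal-weight element of the support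
  have hne : Q.support.Nonempty := MvPolynomial.support_nonempty.mpr hQ0
  obtain ⟨ℓ, hℓmem, hℓmax⟩ := Q.support.exists_max_image (fun d => wt B (⇑d)) hne
  have hℓg : ∀ i, (ℓ : Fin n →₀ ℕ) i < g i := hsupp ℓ hℓmem
  have key : ∀ N : ℕ, ∀ m : Fin n → ℕ, (∀ i, m i < T i) → wt B m < N → s m = s' m := by
    intro N
    induction N with
    | zero => intro m _ h; omega
    | succ N ih =>
      intro m hbox hwt
      by_cases hD : ∃ i, m i + 1 < g i
      · exact hagree m hbox hD
      push_neg at hD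
      have hℓm : ∀ i, (ℓ : Fin n →₀ ℕ) i ≤ m i := by
        intro i; have := hℓg i; have := hD i; omega
      set m₀ : Fin n → ℕ := fun i => m i - ℓ i with hm₀
      have hQsm := hQs m₀
      have hQs'm := hQs' m₀
      unfold recSum at hQsm hQs'm
      rw [← Finset.add_sum_erase _ _ hℓmem] at hQsm hQs'm
      have hmeq : (fun i => m₀ i + (ℓ : Fin n →₀ ℕ) i) = m := by
        funext i; simp only [hm₀]; have := hℓm i; omega
      rw [hmeq] at hQsm hQs'm
      have hrest : ∀ d ∈ Q.support.erase ℓ,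
          s (fun i => m₀ i + (d : Fin n →₀ ℕ) i) = s' (fun i => m₀ i + (d : Fin n →₀ ℕ) i) := by
        intro d hd
        have hdmem : d ∈ Q.support := Finset.mem_of_mem_erase hd
        have hdne : d ≠ ℓ := Finset.ne_of_mem_erase hd
        set p : Fin n → ℕ := fun i => m₀ i + (d : Fin n →₀ ℕ) i with hp
        have hwtd : wt B (⇑d) < wt B (⇑ℓ) := by
          have hle := hℓmax d hdmem
          rcases lt_or_eq_of_le hle with h | h
          · exact h
          · exact absurd (wt_inj hB (fun i => lt_of_lt_of_le (hsupp d hdmem i) (hgB i))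
              (fun i => lt_of_lt_of_le (hℓg i) (hgB i)) h)
              (fun hc => hdne (DFunLike.coe_injective hc))
        have hwtp : wt B p < wt B m := by
          have h1 : wt B p = wt B m₀ + wt B (⇑d) := wt_add_eq m₀ (⇑d)
          have h2 : wt B m = wt B m₀ + wt B (⇑ℓ) := by
            rw [← hmeq]; exact wt_add_eq m₀ (⇑ℓ)
          omega
        have hq : wt B (fun i => p i % T i) ≤ wt B p :=
          wt_le_wt (fun i => Nat.le_of_lt_succ (by
            have := Nat.mod_le (p i) (T i); omega))
        have hqbox : ∀ i, p i % T i < T i := fun i => Nat.mod_lt _ (hT i)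
        calc s p = s (fun i => p i % T i) := periodic_apply_mod hs hT p
          _ = s' (fun i => p i % T i) := ih _ hqbox (by omega)
          _ = s' p := (periodic_apply_mod hs' hT p).symm
      have hsums : (∑ d ∈ Q.support.erase ℓ, Q.coeff d * s (fun i => m₀ i + d i))
          = ∑ d ∈ Q.support.erase ℓ, Q.coeff d * s' (fun i => m₀ i + d i) :=
        Finset.sum_congr rfl (fun d hd => by rw [hrest d hd])
      have hcoeff : Q.coeff ℓ ≠ 0 := MvPolynomial.mem_support_iff.mp hℓmem
      have : Q.coeff ℓ * s m = Q.coeff ℓ * s' m := by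
        have e1 : Q.coeff ℓ * s m = -(∑ d ∈ Q.support.erase ℓ, Q.coeff d * s (fun i => m₀ i + d i)) :=
          eq_neg_of_add_eq_zero_left hQsm
        have e2 : Q.coeff ℓ * s' m = -(∑ d ∈ Q.support.erase ℓ, Q.coeff d * s' (fun i => m₀ i + d i)) :=
          eq_neg_of_add_eq_zero_left hQs'm
        rw [e1, e2, hsums]
      exact mul_left_cancel₀ hcoeff this
  funext m
  calc s m = s (fun i => m i % T i) := periodic_apply_mod hs hT m
    _ = s' (fun i => m i % T i) := key _ _ (fun i => Nat.mod_lt _ (hT i)) (Nat.lt_succ_self _)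
    _ = s' m := (periodic_apply_mod hs' hT m).symm

end Det


section Exists

variable {n : ℕ} {F : Type} [Field F]

lemma coe_efsymm (a : Fin n → ℕ) (i : Fin n) : (Finsupp.equivFunOnFinite.symm a) i = a i := rfl

/-- The quotient by the ideal of a periodic sequence is finite dimensional. -/
lemma finite_quotient_of_periodic {T : Fin n → ℕ} {s : (Fin n → ℕ) → F}
    (hT : ∀ i, 0 < T i) (hs : IsPeriodic T s) :
    Module.Finite F (MvPolynomial (Fin n) F ⧸ seqIdeal s) := by
  classical
  set I := seqIdeal s with hI
  set φ := (Ideal.Quotient.mkₐ F I).toLinearMap with hφ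
  set boxFinset : Finset (Fin n → ℕ) := Fintype.piFinset (fun i => Finset.range (T i)) with hbox
  set gens : Finset (MvPolynomial (Fin n) F ⧸ I) :=
    boxFinset.image (fun m => φ (MvPolynomial.monomial (Finsupp.equivFunOnFinite.symm m) 1)) with hgens
  have hφx : ∀ x, φ x = Ideal.Quotient.mk I x := fun x => by
    rw [hφ]; simp [Ideal.Quotient.mkₐ_eq_mk]
  have hmon : ∀ d : Fin n →₀ ℕ, φ (MvPolynomial.monomial d 1) ∈ Submodule.span F (gens : Set _) := by
    have key : ∀ N : ℕ, ∀ d : Fin n →₀ ℕ, (∑ i, d i) ≤ N →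
        φ (MvPolynomial.monomial d 1) ∈ Submodule.span F (gens : Set _) := by
      intro N
      induction N with
      | zero =>
        intro d hd
        have hdi : ∀ i, d i < T i := by
          intro i
          have h1 : d i ≤ ∑ k, d k := by
            simpa using Finset.single_le_sum (f := fun k => d k) (fun k _ => Nat.zero_le _)
              (Finset.mem_univ i)
          have := hT i
          omega
        apply Submodule.subset_span
        rw [hgens]
        simp only [Finset.coe_image, Set.mem_image, Finset.mem_coe]
        exact ⟨⇑d, by simp [hbox, Fintype.mem_piFinset, hdi], by rw [Finsupp.equivFunOnFinite_symm_coe]⟩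
      | succ N ih =>
        intro d hd
        by_cases hdi : ∀ i, d i < T i
        · apply Submodule.subset_span
          rw [hgens]
          simp only [Finset.coe_image, Set.mem_image, Finset.mem_coe]
          exact ⟨⇑d, by simp [hbox, Fintype.mem_piFinset, hdi], by rw [Finsupp.equivFunOnFinite_symm_coe]⟩
        · push_neg at hdi
          obtain ⟨i₀, hi₀⟩ := hdi
          set d' : Fin n →₀ ℕ := d - Finsupp.single i₀ (T i₀) with hd'
          have hdd' : d' + Finsupp.single i₀ (T i₀) = d := by
            ext i
            rw [Finsupp.add_apply, hd', Finsupp.tsub_apply, Finsupp.single_apply]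
            by_cases h : i₀ = i
            · subst h; rw [if_pos rfl]; omega
            · simp only [if_neg h]; omega
          have hmem : (MvPolynomial.monomial d 1 : MvPolynomial (Fin n) F)
              - MvPolynomial.monomial d' 1 ∈ I := by
            have heq : (MvPolynomial.monomial d 1 : MvPolynomial (Fin n) F)
                - MvPolynomial.monomial d' 1
                = MvPolynomial.monomial d' 1 * ((MvPolynomial.X i₀) ^ T i₀ - 1) := by
              rw [mul_sub, mul_one, MvPolynomial.X_pow_eq_monomial,
                MvPolynomial.monomial_mul, one_mul, hdd']
            rw [heq]
            exact Ideal.mul_mem_left I _ (hs i₀)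
          have heqq : φ (MvPolynomial.monomial d 1) = φ (MvPolynomial.monomial d' 1) := by
            rw [hφx, hφx, Ideal.Quotient.mk_eq_mk_iff_sub_mem]
            exact hmem
          rw [heqq]
          apply ih
          have hsum : (∑ i, d' i) + T i₀ = ∑ i, d i := by
            have := congrArg (fun f : Fin n →₀ ℕ => ∑ i, f i) hdd'
            simp only [Finsupp.add_apply] at this
            rw [Finset.sum_add_distrib] at this
            have hsingle : (∑ i, (Finsupp.single i₀ (T i₀) : Fin n →₀ ℕ) i) = T i₀ := by
              rw [Finset.sum_eq_single i₀]
              · rw [Finsupp.single_eq_same]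
              · intro b _ hb
                rw [Finsupp.single_apply, if_neg (fun hc => hb hc.symm)]
              · intro h; exact absurd (Finset.mem_univ i₀) h
            omega
          have := hT i₀
          omega
    exact fun d => key (∑ i, d i) d le_rfl
  refine ⟨⟨gens, ?_⟩⟩
  rw [eq_top_iff]
  rintro v -
  obtain ⟨P, rfl⟩ := Ideal.Quotient.mk_surjective (I := I) v
  have hPφ : Ideal.Quotient.mk I P = φ P := (hφx P).symm
  have hP2 : φ P = ∑ d ∈ P.support, MvPolynomial.coeff d P • φ (MvPolynomial.monomial d 1) := by
    conv_lhs => rw [P.as_sum]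
    rw [map_sum]
    apply Finset.sum_congr rfl
    intro d _
    have : (MvPolynomial.monomial d (MvPolynomial.coeff d P) : MvPolynomial (Fin n) F)
        = MvPolynomial.coeff d P • MvPolynomial.monomial d 1 := by
      rw [MvPolynomial.smul_monomial, smul_eq_mul, mul_one]
    rw [this, map_smul]
  rw [hPφ, hP2]
  exact Submodule.sum_mem _ (fun d _ => Submodule.smul_mem _ _ (hmon d))

/-- If the linear complexity of a periodic sequence is less than `∏ g i`, there is a nonzero
recurrence supported in the box `∏ [0, g i)`. -/
lemma exists_small_relation {T g : Fin n → ℕ} {s : (Fin n → ℕ) → F}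
    (hT : ∀ i, 0 < T i) (hs : IsPeriodic T s) (hL : linComp s < ∏ i, g i) :
    ∃ Q : MvPolynomial (Fin n) F, Q ≠ 0 ∧ (∀ d ∈ Q.support, ∀ i, (d : Fin n →₀ ℕ) i < g i)
      ∧ Q ∈ seqIdeal s := by
  classical
  by_contra hcon
  push_neg at hcon
  set I := seqIdeal s with hI
  set φ := (Ideal.Quotient.mkₐ F I).toLinearMap with hφ
  haveI hfin : Module.Finite F (MvPolynomial (Fin n) F ⧸ I) := finite_quotient_of_periodic hT hs
  set ι := ↥(Fintype.piFinset (fun i => Finset.range (g i))) with hι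
  have hιmem : ∀ j : ι, ∀ i, (j : Fin n → ℕ) i < g i := by
    intro j i
    have := j.2
    rw [Fintype.mem_piFinset] at this
    simpa using this i
  set v : ι → (MvPolynomial (Fin n) F ⧸ I) :=
    fun j => φ (MvPolynomial.monomial (Finsupp.equivFunOnFinite.symm (j : Fin n → ℕ)) 1) with hv
  set ψ : (ι → F) →ₗ[F] (MvPolynomial (Fin n) F ⧸ I) := Fintype.linearCombination F v with hψ
  -- the polynomial associated to coefficients
  have hQc : ∀ c : ι → F, ψ c = φ (∑ j : ι,
      c j • MvPolynomial.monomial (Finsupp.equivFunOnFinite.symm (j : Fin n → ℕ)) 1) := by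
    intro c
    rw [hψ, Fintype.linearCombination_apply, map_sum]
    exact Finset.sum_congr rfl (fun j _ => by rw [map_smul])
  have hψinj : Function.Injective ψ := by
    rw [← LinearMap.ker_eq_bot, eq_bot_iff]
    rintro c hc
    set Qc : MvPolynomial (Fin n) F := ∑ j : ι,
      c j • MvPolynomial.monomial (Finsupp.equivFunOnFinite.symm (j : Fin n → ℕ)) 1 with hQcdef
    have hcoeff : ∀ j₀ : ι, Qc.coeff (Finsupp.equivFunOnFinite.symm (j₀ : Fin n → ℕ)) = c j₀ := by
      intro j₀
      rw [hQcdef, MvPolynomial.coeff_sum]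
      rw [Finset.sum_eq_single j₀]
      · rw [MvPolynomial.coeff_smul, MvPolynomial.coeff_monomial, if_pos rfl,
          smul_eq_mul, mul_one]
      · intro j _ hj
        rw [MvPolynomial.coeff_smul, MvPolynomial.coeff_monomial, if_neg, smul_eq_mul, mul_zero]
        intro hc'
        apply hj
        exact Subtype.ext (Finsupp.equivFunOnFinite.symm.injective hc')
      · intro h; exact absurd (Finset.mem_univ j₀) h
    have hsupp : ∀ d ∈ Qc.support, ∀ i, (d : Fin n →₀ ℕ) i < g i := by
      intro d hd
      by_contra hdc
      push_neg at hdc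
      apply MvPolynomial.mem_support_iff.mp hd
      rw [hQcdef, MvPolynomial.coeff_sum]
      apply Finset.sum_eq_zero
      intro j _
      rw [MvPolynomial.coeff_smul, MvPolynomial.coeff_monomial, if_neg, smul_eq_mul, mul_zero]
      intro hc'
      obtain ⟨i, hi⟩ := hdc
      have : (d : Fin n →₀ ℕ) i = (j : Fin n → ℕ) i := by rw [← hc']; rfl
      exact absurd (this ▸ hιmem j i) (by omega)
    have hQcI : Qc ∈ I := by
      have : φ Qc = 0 := by rw [← hQc c]; exact hc
      rw [hφ] at this
      simp only [AlgHom.toLinearMap_apply, Ideal.Quotient.mkₐ_eq_mk] at this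
      exact (Ideal.Quotient.eq_zero_iff_mem).mp this
    have hQc0 : Qc = 0 := by
      by_contra hQcne
      exact (hcon Qc hQcne hsupp) hQcI
    have : c = 0 := by
      funext j₀
      have := hcoeff j₀
      rw [hQc0] at this
      simpa using this.symm
    simp [this]
  have hcard : Fintype.card ι ≤ Module.finrank F (MvPolynomial (Fin n) F ⧸ I) := by
    have h1 := LinearMap.finrank_le_finrank_of_injective hψinj
    rwa [Module.finrank_fintype_fun_eq_card] at h1
  have hcard2 : Fintype.card ι = ∏ i, g i := by
    calc Fintype.card ι = (Fintype.piFinset fun i => Finset.range (g i)).card :=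
          Fintype.card_coe _
      _ = ∏ i, (Finset.range (g i)).card := Fintype.card_piFinset _
      _ = ∏ i, g i := by simp
  rw [hcard2] at hcard
  have hlc : linComp s = Module.finrank F (MvPolynomial (Fin n) F ⧸ I) := rfl
  omega

end Exists


section Count

variable {n : ℕ} {F : Type} [Field F] [Fintype F]

/-- Restriction of a periodic sequence to the period box is injective. -/
lemma periodic_restrict_injective {T : Fin n → ℕ} (hT : ∀ i, 0 < T i) :
    Function.Injective (fun (s : {s : (Fin n → ℕ) → F // IsPeriodic T s})
      (b : ↥(Fintype.piFinset (fun i => Finset.range (T i)))) => s.1 b.1) := by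
  intro s s' h
  apply Subtype.ext
  funext m
  have hmem : (fun i => m i % T i) ∈ Fintype.piFinset (fun i => Finset.range (T i)) := by
    rw [Fintype.mem_piFinset]
    exact fun i => Finset.mem_range.mpr (Nat.mod_lt _ (hT i))
  calc s.1 m = s.1 (fun i => m i % T i) := periodic_apply_mod s.2 hT m
    _ = s'.1 (fun i => m i % T i) := congrFun h ⟨_, hmem⟩
    _ = s'.1 m := (periodic_apply_mod s'.2 hT m).symm

lemma periodic_finite {T : Fin n → ℕ} (hT : ∀ i, 0 < T i) :
    Finite {s : (Fin n → ℕ) → F // IsPeriodic T s} :=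
  Finite.of_injective _ (periodic_restrict_injective hT)

lemma periodic_ncard_ge {T : Fin n → ℕ} (hT : ∀ i, 0 < T i) :
    (Fintype.card F) ^ (∏ i, T i) ≤ {s : (Fin n → ℕ) → F | IsPeriodic T s}.ncard := by
  classical
  set boxF := Fintype.piFinset (fun i => Finset.range (T i)) with hbox
  set ext : (↥boxF → F) → {s : (Fin n → ℕ) → F // IsPeriodic T s} := fun f =>
    ⟨fun m => f ⟨fun i => m i % T i, by
        rw [Fintype.mem_piFinset]; exact fun i => Finset.mem_range.mpr (Nat.mod_lt _ (hT i))⟩,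
      by
        set gg : (Fin n → ℕ) → F := fun m => f ⟨fun i => m i % T i, by
          rw [Fintype.mem_piFinset]; exact fun i => Finset.mem_range.mpr (Nat.mod_lt _ (hT i))⟩
          with hgg
        have h1 := isPeriodic_of_mod (T := T) gg
        have h2 : (fun m => gg (fun i => m i % T i)) = gg := by
          funext m
          show f ⟨fun i => (m i % T i) % T i, _⟩ = f ⟨fun i => m i % T i, _⟩
          exact congrArg f (Subtype.ext (funext fun i => Nat.mod_mod_of_dvd _ dvd_rfl))
        rwa [h2] at h1⟩ with hext
  have hinj : Function.Injective ext := by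
    intro f f' h
    funext b
    have h1 := congrFun (congrArg Subtype.val h) b.1
    simp only [hext] at h1
    have hb : ∀ i, b.1 i < T i := by
      have := b.2
      rw [Fintype.mem_piFinset] at this
      exact fun i => Finset.mem_range.mp (this i)
    have e : (fun i => b.1 i % T i) = b.1 := by
      funext i; exact Nat.mod_eq_of_lt (hb i)
    have e2 : (⟨fun i => b.1 i % T i, by
        rw [Fintype.mem_piFinset]
        exact fun i => Finset.mem_range.mpr (Nat.mod_lt _ (hT i))⟩ : ↥boxF) = b :=
      Subtype.ext e
    rwa [e2] at h1
  haveI := periodic_finite (F := F) hT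
  have hle := Nat.card_le_card_of_injective ext hinj
  rw [Nat.card_eq_fintype_card] at hle
  have hcard : Fintype.card (↥boxF → F) = (Fintype.card F) ^ (∏ i, T i) := by
    rw [Fintype.card_fun, Fintype.card_coe, hbox, Fintype.card_piFinset]
    congr 1
    exact Finset.prod_congr rfl (fun i _ => Finset.card_range _)
  rw [hcard] at hle
  have : Nat.card {s : (Fin n → ℕ) → F // IsPeriodic T s}
      = {s : (Fin n → ℕ) → F | IsPeriodic T s}.ncard := by
    rw [← Nat.card_coe_set_eq]
    rfl
  omega

end Count


section BadCount

variable {n : ℕ} {F : Type} [Field F] [Fintype F]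

/-- Counting periodic sequences of small linear complexity. -/
lemma bad_ncard_le (hn : 0 < n) {T g : Fin n → ℕ} (hT : ∀ i, 0 < T i)
    (hg : ∀ i, 0 < g i) (hgle : ∀ i, g i ≤ T i) :
    ({s : (Fin n → ℕ) → F | IsPeriodic T s ∧ linComp s < ∏ i, g i}).ncard
      ≤ (Fintype.card F) ^ ((∏ i, g i) + ((∏ i, T i) - ∏ i, (T i + 1 - g i))) := by
  classical
  set boxF := Fintype.piFinset (fun i => Finset.range (T i)) with hboxF
  set GF := Fintype.piFinset (fun i => Finset.range (g i)) with hGF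
  set DF := boxF.filter (fun m => ∃ i, m i + 1 < g i) with hDF
  set Bad := {s : (Fin n → ℕ) → F | IsPeriodic T s ∧ linComp s < ∏ i, g i} with hBad
  -- choose a small relation for each bad sequence
  have hex : ∀ s : ↥Bad, ∃ Q : MvPolynomial (Fin n) F, Q ≠ 0
      ∧ (∀ d ∈ Q.support, ∀ i, (d : Fin n →₀ ℕ) i < g i) ∧ Q ∈ seqIdeal s.1 :=
    fun s => exists_small_relation hT s.2.1 s.2.2
  choose Qf hQ0 hQsupp hQmem using hex
  set Φ : ↥Bad → ((↥GF → F) × (↥DF → F)) := fun s =>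
    (fun j => (Qf s).coeff (Finsupp.equivFunOnFinite.symm j.1), fun d => s.1 d.1) with hΦ
  have hΦinj : Function.Injective Φ := by
    intro s s' h
    have h1 := congrArg Prod.fst h
    have h2 := congrArg Prod.snd h
    simp only [hΦ] at h1 h2
    have hQeq : Qf s = Qf s' := by
      apply MvPolynomial.ext
      intro d
      by_cases hd : ∀ i, d i < g i
      · have hdmem : ⇑d ∈ GF := by
          rw [hGF, Fintype.mem_piFinset]
          exact fun i => Finset.mem_range.mpr (hd i)
        have := congrFun h1 ⟨⇑d, hdmem⟩
        simpa only [Finsupp.equivFunOnFinite_symm_coe] using this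
      · have hz : ∀ t : ↥Bad, (Qf t).coeff d = 0 := by
          intro t
          rw [← MvPolynomial.notMem_support_iff] at *
          intro hmem
          exact hd (hQsupp t d hmem)
        rw [hz s, hz s']
    have hagree : ∀ m : Fin n → ℕ, (∀ i, m i < T i) → (∃ i, m i + 1 < g i) →
        s.1 m = s'.1 m := by
      intro m hbox hD
      have hmmem : m ∈ DF := by
        rw [hDF, Finset.mem_filter]
        exact ⟨by rw [hboxF, Fintype.mem_piFinset]; exact fun i => Finset.mem_range.mpr (hbox i), hD⟩
      exact congrFun h2 ⟨m, hmmem⟩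
    have := determined hn hT hg s.2.1 s'.2.1 (hQ0 s) (hQmem s) (hQeq ▸ hQmem s')
      (hQsupp s) hagree
    exact Subtype.ext this
  haveI : Finite ↥Bad := by
    haveI := periodic_finite (F := F) (T := T) (fun i => hT i)
    refine Finite.of_injective
      (fun s : ↥Bad => (⟨s.1, s.2.1⟩ : {s : (Fin n → ℕ) → F // IsPeriodic T s})) ?_
    intro a b hab
    have h' : a.1 = b.1 := by simpa [Subtype.ext_iff] using hab
    exact Subtype.ext h'
  have hle := Nat.card_le_card_of_injective Φ hΦinj
  clear_value boxF GF DF Bad Φ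
  clear hΦinj hΦ Φ hQmem hQsupp hQ0 Qf
  have hle2 : Nat.card ↥Bad ≤ Nat.card ((↥GF → F) × (↥DF → F)) := hle
  clear hle
  -- compute target cardinality
  have hGcard : GF.card = ∏ i, g i := by
    rw [hGF, Fintype.card_piFinset]
    exact Finset.prod_congr rfl (fun i _ => Finset.card_range _)
  have hDcard : DF.card = (∏ i, T i) - ∏ i, (T i + 1 - g i) := by
    clear * - hg hgle hT hboxF hDF
    have htop : boxF.filter (fun m => ¬ ∃ i, m i + 1 < g i)
        = Fintype.piFinset (fun i => Finset.Ico (g i - 1) (T i)) := by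
      ext m
      rw [Finset.mem_filter, hboxF, Fintype.mem_piFinset, Fintype.mem_piFinset]
      push_neg
      constructor
      · rintro ⟨hbox, hnot⟩ i
        rw [Finset.mem_Ico]
        have h1 := Finset.mem_range.mp (hbox i)
        have h2 := hnot i
        omega
      · intro h
        constructor
        · intro i
          have := Finset.mem_Ico.mp (h i)
          exact Finset.mem_range.mpr this.2
        · intro i
          have := Finset.mem_Ico.mp (h i)
          have := hg i
          omega
    have htopcard : (Fintype.piFinset (fun i => Finset.Ico (g i - 1) (T i))).card
        = ∏ i, (T i + 1 - g i) := by
      rw [Fintype.card_piFinset]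
      apply Finset.prod_congr rfl
      intro i _
      rw [Nat.card_Ico]
      have := hg i
      have := hgle i
      omega
    have hboxcard : boxF.card = ∏ i, T i := by
      rw [hboxF, Fintype.card_piFinset]
      exact Finset.prod_congr rfl (fun i _ => Finset.card_range _)
    have hsplit := Finset.card_filter_add_card_filter_not
      (s := boxF) (p := fun m => ∃ i, m i + 1 < g i)
    rw [htop, htopcard, hboxcard, ← hDF] at hsplit
    exact Nat.eq_sub_of_add_eq hsplit
  have htarget : Fintype.card ((↥GF → F) × (↥DF → F))
      = (Fintype.card F) ^ ((∏ i, g i) + ((∏ i, T i) - ∏ i, (T i + 1 - g i))) := by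
    rw [Fintype.card_prod, Fintype.card_fun, Fintype.card_fun, Fintype.card_coe,
      Fintype.card_coe, hGcard, hDcard, ← pow_add]
  calc Bad.ncard = Nat.card ↥Bad := (Nat.card_coe_set_eq _).symm
    _ ≤ Nat.card ((↥GF → F) × (↥DF → F)) := hle2
    _ = Fintype.card ((↥GF → F) × (↥DF → F)) := Nat.card_eq_fintype_card
    _ = (Fintype.card F) ^ ((∏ i, g i) + ((∏ i, T i) - ∏ i, (T i + 1 - g i))) := htarget

end BadCount

/-- For any `ε₁, ε₂ > 0` there is a constant `C` (depending on `ε₁, ε₂, n, q`) such that if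
`T_1 ⋯ T_n > C`, the number of `(T_1,…,T_n)`-periodic sequences `s` with
`L(s) > √((1-ε₁) T_1 ⋯ T_n / (n-1))` is strictly greater than `(1-ε₂) q^{T_1 ⋯ T_n}`. -/
theorem statement_14 {n : ℕ} (hn : 2 ≤ n) {F : Type} [Field F] [Fintype F]
    (q : ℕ) (hq : Fintype.card F = q)
    (ε₁ ε₂ : ℝ) (hε₁ : 0 < ε₁) (hε₂ : 0 < ε₂) :
    ∃ C : ℝ, ∀ T : Fin n → ℕ, (∀ i, 0 < T i) → ((∏ i, T i : ℕ) : ℝ) > C →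
      (1 - ε₂) * (q : ℝ) ^ (∏ i, T i)
        < ({s : (Fin n → ℕ) → F | IsPeriodic T s ∧
            Real.sqrt ((1 - ε₁) * (∏ i, T i) / ((n : ℝ) - 1)) < (linComp s : ℝ)}.ncard : ℝ) := by
  classical
  have hn0 : 0 < n := by omega
  have hq2 : 2 ≤ q := hq ▸ Fintype.one_lt_card
  have hq1R : (1:ℝ) < q := by exact_mod_cast hq2
  have hq0R : (0:ℝ) < q := by linarith
  obtain ⟨K, hK⟩ := pow_unbounded_of_one_lt (ε₂⁻¹) hq1R
  have hK' : 1 < ε₂ * (q:ℝ)^K := by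
    have h := mul_lt_mul_of_pos_left hK hε₂
    rwa [mul_inv_cancel₀ (ne_of_gt hε₂)] at h
  refine ⟨((16^n + K * 4^n : ℕ) : ℝ), ?_⟩
  intro T hT hPC
  set P := ∏ i, T i with hP
  set g : Fin n → ℕ := fun i => (T i + 3) / 4 with hgdef
  have hg1 : ∀ i, 0 < g i := fun i => by have := hT i; simp only [hgdef]; omega
  have hgle : ∀ i, g i ≤ T i := fun i => by have := hT i; simp only [hgdef]; omega
  have hgfac : ∀ i, g i ≤ T i + 1 - g i := fun i => by have := hT i; simp only [hgdef]; omega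
  have hT4g : ∀ i, T i ≤ 4 * g i := fun i => by simp only [hgdef]; omega
  have hPC' : (16^n + K * 4^n : ℕ) < P := by exact_mod_cast hPC
  have h16pos : (1:ℕ) ≤ 16^n := Nat.one_le_pow _ _ (by norm_num)
  have hP16 : 16^n < P := by omega
  have hPK4 : K * 4^n < P := by omega
  have hP0 : 0 < P := by omega
  set G := ∏ i, g i with hG
  set E := ∏ i, (T i + 1 - g i) with hE
  have hGE : G ≤ E :=
    Finset.prod_le_prod (fun i _ => Nat.zero_le _) (fun i _ => hgfac i)
  have hEP : E ≤ P :=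
    Finset.prod_le_prod (fun i _ => Nat.zero_le _) (fun i _ => by have := hg1 i; omega)
  have hPle : P ≤ 4^n * G := by
    calc P ≤ ∏ i, (4 * g i) :=
          Finset.prod_le_prod (fun i _ => Nat.zero_le _) (fun i _ => hT4g i)
      _ = 4^n * G := by
          rw [Finset.prod_mul_distrib, Finset.prod_const, Finset.card_univ, Fintype.card_fin]
  have hi₀ : ∃ i₀, 5 ≤ T i₀ := by
    by_contra hc
    push_neg at hc
    have hle4 : P ≤ 4^n := by
      calc P ≤ ∏ _i : Fin n, (4:ℕ) :=
            Finset.prod_le_prod (fun i _ => Nat.zero_le _) (fun i _ => by have := hc i; omega)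
        _ = 4^n := by rw [Finset.prod_const, Finset.card_univ, Fintype.card_fin]
    have h416 : (4:ℕ)^n ≤ 16^n := Nat.pow_le_pow_left (by norm_num) n
    omega
  obtain ⟨i₀, hi₀⟩ := hi₀
  have h2G : 2 * G ≤ E := by
    have hfac : 2 * g i₀ ≤ T i₀ + 1 - g i₀ := by simp only [hgdef]; omega
    calc 2 * G = (2 * g i₀) * ∏ i ∈ Finset.univ.erase i₀, g i := by
          rw [hG, ← Finset.mul_prod_erase _ _ (Finset.mem_univ i₀)]; ring
      _ ≤ (T i₀ + 1 - g i₀) * ∏ i ∈ Finset.univ.erase i₀, (T i + 1 - g i) :=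
          Nat.mul_le_mul hfac
            (Finset.prod_le_prod (fun i _ => Nat.zero_le _) (fun i _ => hgfac i))
      _ = E := by rw [hE, ← Finset.mul_prod_erase _ _ (Finset.mem_univ i₀)]
  have hKG : K ≤ G := by
    by_contra hc
    push_neg at hc
    have hx : P < P := by
      calc P ≤ 4^n * G := hPle
        _ < 4^n * K := mul_lt_mul_of_pos_left hc (pow_pos (by norm_num) n)
        _ = K * 4^n := Nat.mul_comm _ _
        _ < P := hPK4
    exact absurd hx (lt_irrefl P)
  have hKP : K ≤ P := by omega
  have hexp : G + (P - E) ≤ P - K := by omega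
  -- the real bound on the square root
  have hG0 : 0 < G := Finset.prod_pos (fun i _ => hg1 i)
  have hPR : (0:ℝ) < P := by exact_mod_cast hP0
  have hsq : Real.sqrt ((1 - ε₁) * (P:ℝ) / ((n : ℝ) - 1)) < (G:ℝ) := by
    have hn1 : (1:ℝ) ≤ (n:ℝ) - 1 := by
      have : (2:ℝ) ≤ n := by exact_mod_cast hn
      linarith
    have harg : (1 - ε₁) * (P:ℝ) / ((n:ℝ) - 1) ≤ (P:ℝ) := by
      rw [div_le_iff₀ (by linarith)]
      nlinarith [hPR.le, hε₁]
    have h1 : Real.sqrt ((1-ε₁) * (P:ℝ) / ((n:ℝ)-1)) ≤ Real.sqrt P := Real.sqrt_le_sqrt harg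
    have h2 : Real.sqrt (P:ℝ) < (G:ℝ) := by
      have h16R : ((16:ℝ))^n < (P:ℝ) := by exact_mod_cast hP16
      have h4 : ((4:ℝ)^n) < Real.sqrt P := by
        rw [Real.lt_sqrt (by positivity)]
        calc ((4:ℝ)^n)^2 = (16:ℝ)^n := by
              rw [← pow_mul, mul_comm n 2, pow_mul]; norm_num
          _ < (P:ℝ) := h16R
      have hsP : 0 < Real.sqrt P := Real.sqrt_pos.mpr hPR
      have hPG : (P:ℝ) ≤ 4^n * G := by exact_mod_cast hPle
      have hG1R : (1:ℝ) ≤ G := by exact_mod_cast hG0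
      nlinarith [Real.mul_self_sqrt hPR.le]
    exact lt_of_le_of_lt h1 h2
  -- counting
  set SA := Real.sqrt ((1 - ε₁) * (P:ℝ) / ((n : ℝ) - 1)) with hSA
  set Per := {s : (Fin n → ℕ) → F | IsPeriodic T s} with hPerDef
  set Bad := {s : (Fin n → ℕ) → F | IsPeriodic T s ∧ (linComp s : ℝ) ≤ SA} with hBadDef
  haveI hPerFinite : Finite ↥Per := periodic_finite hT
  have hPerFin : Per.Finite := Set.toFinite Per
  have hBadSubPer : Bad ⊆ Per := fun s hs => hs.1
  have hBadFin : Bad.Finite := hPerFin.subset hBadSubPer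
  have hBadSub2 : Bad ⊆ {s : (Fin n → ℕ) → F | IsPeriodic T s ∧ linComp s < G} := by
    intro s hs
    refine ⟨hs.1, ?_⟩
    have h1 : (linComp s : ℝ) < (G:ℝ) := lt_of_le_of_lt hs.2 hsq
    exact_mod_cast h1
  have hBadG_fin : ({s : (Fin n → ℕ) → F | IsPeriodic T s ∧ linComp s < G}).Finite :=
    hPerFin.subset (fun s hs => hs.1)
  have hBadle : Bad.ncard ≤ q ^ (G + (P - E)) := by
    have h1 := Set.ncard_le_ncard hBadSub2 hBadG_fin
    have h2 := bad_ncard_le (F := F) hn0 hT hg1 hgle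
    rw [hq] at h2
    exact le_trans h1 h2
  have hBadle2 : Bad.ncard ≤ q ^ (P - K) :=
    le_trans hBadle (Nat.pow_le_pow_right (by omega) hexp)
  have hPer : q ^ P ≤ Per.ncard := by
    have h := periodic_ncard_ge (F := F) hT
    rwa [hq] at h
  have hBadLePer : Bad.ncard ≤ Per.ncard := Set.ncard_le_ncard hBadSubPer hPerFin
  have hGoodEq : {s : (Fin n → ℕ) → F | IsPeriodic T s ∧ SA < (linComp s : ℝ)}
      = Per \ Bad := by
    ext s
    simp only [Set.mem_diff, Set.mem_setOf_eq, hPerDef, hBadDef]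
    constructor
    · rintro ⟨h1, h2⟩
      exact ⟨h1, fun hc => absurd hc.2 (not_le.mpr h2)⟩
    · rintro ⟨h1, h2⟩
      exact ⟨h1, not_le.mp (fun hc => h2 ⟨h1, hc⟩)⟩
  have hGoodCard : ({s : (Fin n → ℕ) → F | IsPeriodic T s ∧ SA < (linComp s : ℝ)}).ncard
      = Per.ncard - Bad.ncard := by
    rw [hGoodEq]
    exact Set.ncard_diff hBadSubPer hBadFin
  -- final real arithmetic
  have hqPK : (q:ℝ)^(P-K) * (q:ℝ)^K = (q:ℝ)^P := by
    rw [← pow_add]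
    congr 1
    omega
  have hfinal : (q:ℝ)^(P-K) < ε₂ * (q:ℝ)^P := by
    have hpos : (0:ℝ) < (q:ℝ)^(P-K) := by positivity
    calc (q:ℝ)^(P-K) = (q:ℝ)^(P-K) * 1 := by ring
      _ < (q:ℝ)^(P-K) * (ε₂ * (q:ℝ)^K) := by
          exact mul_lt_mul_of_pos_left hK' hpos
      _ = ε₂ * ((q:ℝ)^(P-K) * (q:ℝ)^K) := by ring
      _ = ε₂ * (q:ℝ)^P := by rw [hqPK]
  have hcast3 : ((q:ℕ)^P : ℝ) = (q:ℝ)^P := by push_cast; rfl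
  have hcast4 : ((q:ℕ)^(P-K) : ℝ) = (q:ℝ)^(P-K) := by push_cast; rfl
  have hPerR : (q:ℝ)^P ≤ (Per.ncard : ℝ) := by
    rw [← hcast3]
    exact_mod_cast hPer
  have hBadR : (Bad.ncard : ℝ) ≤ (q:ℝ)^(P-K) := by
    rw [← hcast4]
    exact_mod_cast hBadle2
  have hGoodR : (({s : (Fin n → ℕ) → F | IsPeriodic T s ∧ SA < (linComp s : ℝ)}).ncard : ℝ)
      = (Per.ncard : ℝ) - (Bad.ncard : ℝ) := by
    rw [hGoodCard]
    exact Nat.cast_sub hBadLePer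
  rw [hGoodR]
  linarith
end
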